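/- arXiv:0902.2153 — 4 statements merged into one kernel-verified Lean document; each statement's English description precedes it below -/
import Mathlib

section
/- There exists a constant C > 0 (depending only on m, the speeds a_1,…,a_m and the vectors l_1,…,l_m) such that for every p ∈ [1,∞]: (i) for all t > 0, the L^p norm over (−∞,0] of y ↦ ∂_y e(y,t) is at most C t^{−(1/2)(1−1/p)}, and (ii) for all t ≥ 1, the L^p norm over (−∞,0] of y ↦ ∂_t e(y,t) is at most C t^{−(1/2)(1−1/p)}. (Here 1/∞ is interpreted as 0.) -/
open MeasureTheory Real Set
open scoped ENNReal

/-- errfn(z) := (1/√π) ∫_{−∞}^{z} e^{−u²} du -/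
noncomputable def errfn (z : ℝ) : ℝ :=
  (Real.sqrt Real.pi)⁻¹ * ∫ u in Set.Iic z, Real.exp (-u ^ 2)

/-- e(y,t) := Σ_{k} ( errfn((y + a_k t)/√(4t)) − errfn((y − a_k t)/√(4t)) ) l_k -/
noncomputable def eKer {n m : ℕ} (a : Fin m → ℝ) (l : Fin m → EuclideanSpace ℝ (Fin n))
    (y t : ℝ) : EuclideanSpace ℝ (Fin n) :=
  ∑ k, (errfn ((y + a k * t) / Real.sqrt (4 * t))
      - errfn ((y - a k * t) / Real.sqrt (4 * t))) • l k


lemma int_gauss : Integrable (fun u : ℝ => Real.exp (-u ^ 2)) := by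
  have := integrable_exp_neg_mul_sq (b := 1) one_pos
  simpa using this

lemma errfn_hasDerivAt (z : ℝ) :
    HasDerivAt errfn ((Real.sqrt Real.pi)⁻¹ * Real.exp (-z ^ 2)) z := by
  have key : ∀ w : ℝ, errfn w = (Real.sqrt Real.pi)⁻¹ *
      ((∫ u in Set.Iic (0:ℝ), Real.exp (-u ^ 2)) + ∫ u in (0:ℝ)..w, Real.exp (-u ^ 2)) := by
    intro w
    have := intervalIntegral.integral_Iic_sub_Iic (μ := volume)
      (f := fun u : ℝ => Real.exp (-u ^ 2)) (a := (0:ℝ)) (b := w)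
      int_gauss.integrableOn int_gauss.integrableOn
    unfold errfn
    rw [← this]
    ring
  have h1 : HasDerivAt (fun w => ∫ u in (0:ℝ)..w, Real.exp (-u ^ 2)) (Real.exp (-z ^ 2)) z :=
    ((Real.continuous_exp.comp (by continuity)).integral_hasStrictDerivAt 0 z).hasDerivAt
  have h2 := (h1.const_add (∫ u in Set.Iic (0:ℝ), Real.exp (-u ^ 2))).const_mul
    ((Real.sqrt Real.pi)⁻¹)
  exact h2.congr_of_eventuallyEq (Filter.Eventually.of_forall fun w => key w)

lemma absz_exp (z : ℝ) : |z| * Real.exp (-z ^ 2) ≤ Real.exp (-z ^ 2 / 2) := by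
  have h1 : |z| ≤ Real.exp (z ^ 2 / 2) := by
    have h2 := Real.add_one_le_exp (z ^ 2 / 2)
    nlinarith [sq_nonneg (|z| - 1), sq_abs z]
  calc |z| * Real.exp (-z ^ 2) ≤ Real.exp (z ^ 2 / 2) * Real.exp (-z ^ 2) :=
        mul_le_mul_of_nonneg_right h1 (Real.exp_pos _).le
    _ = Real.exp (-z ^ 2 / 2) := by rw [← Real.exp_add]; ring_nf

lemma rpow_neg_half (t : ℝ) (ht : 0 < t) : t ^ (-(1/2) : ℝ) = (Real.sqrt t)⁻¹ := by
  rw [Real.rpow_neg ht.le, Real.sqrt_eq_rpow]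

lemma sqrt4t (t : ℝ) (ht : 0 ≤ t) : Real.sqrt (4 * t) = 2 * Real.sqrt t := by
  rw [show (4:ℝ) = 2 ^ 2 by norm_num, Real.sqrt_mul (by positivity), Real.sqrt_sq (by norm_num)]

lemma key_y (t : ℝ) (ht : 0 < t) (b y : ℝ) :
    |(Real.sqrt Real.pi)⁻¹ * Real.exp (-(((y + b) / Real.sqrt (4 * t))) ^ 2) *
        (Real.sqrt (4 * t))⁻¹|
      ≤ (Real.sqrt Real.pi)⁻¹ / 2 * t ^ (-(1/2) : ℝ) * Real.exp (-(y + b) ^ 2 / (8 * t)) := by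
  have hst : 0 < Real.sqrt t := Real.sqrt_pos.mpr ht
  have hz2 : (((y + b) / Real.sqrt (4 * t))) ^ 2 = (y + b) ^ 2 / (4 * t) := by
    rw [div_pow, Real.sq_sqrt (by linarith)]
  have hXE : Real.exp (-(((y + b) / Real.sqrt (4 * t))) ^ 2) ≤ Real.exp (-(y + b) ^ 2 / (8 * t)) := by
    rw [hz2, Real.exp_le_exp]
    have h48 : (y + b) ^ 2 / (8 * t) ≤ (y + b) ^ 2 / (4 * t) :=
      div_le_div_of_nonneg_left (sq_nonneg _) (by linarith) (by linarith)
    rw [neg_div]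
    linarith
  have hinv : (Real.sqrt (4 * t))⁻¹ = (2:ℝ)⁻¹ * (Real.sqrt t)⁻¹ := by
    rw [sqrt4t t ht.le, mul_inv]
  rw [abs_mul, abs_mul, abs_of_nonneg (by positivity), abs_of_nonneg (Real.exp_pos _).le,
    abs_of_nonneg (by positivity), hinv, rpow_neg_half t ht]
  calc (Real.sqrt Real.pi)⁻¹ * Real.exp (-(((y + b) / Real.sqrt (4 * t))) ^ 2) *
        ((2:ℝ)⁻¹ * (Real.sqrt t)⁻¹)
      ≤ (Real.sqrt Real.pi)⁻¹ * Real.exp (-(y + b) ^ 2 / (8 * t)) * ((2:ℝ)⁻¹ * (Real.sqrt t)⁻¹) := by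
        gcongr
    _ = (Real.sqrt Real.pi)⁻¹ / 2 * (Real.sqrt t)⁻¹ * Real.exp (-(y + b) ^ 2 / (8 * t)) := by
        ring

lemma key_t (t : ℝ) (ht : 1 ≤ t) (c y : ℝ) :
    |(Real.sqrt Real.pi)⁻¹ * Real.exp (-(((y + c * t) / Real.sqrt (4 * t))) ^ 2) *
        (c / Real.sqrt (4 * t) - ((y + c * t) / Real.sqrt (4 * t)) / (2 * t))|
      ≤ (Real.sqrt Real.pi)⁻¹ * (|c| + 1) / 2 * t ^ (-(1/2) : ℝ) *
        Real.exp (-(y + c * t) ^ 2 / (8 * t)) := by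
  have ht0 : (0:ℝ) < t := by linarith
  have hst : 0 < Real.sqrt t := Real.sqrt_pos.mpr ht0
  have hst1 : 1 ≤ Real.sqrt t := by nlinarith [Real.sq_sqrt ht0.le]
  have hstt : Real.sqrt t ≤ t := by nlinarith [Real.sq_sqrt ht0.le]
  set z := (y + c * t) / Real.sqrt (4 * t) with hzdef
  set X := Real.exp (-z ^ 2) with hX
  set E := Real.exp (-(y + c * t) ^ 2 / (8 * t)) with hE
  have hz2 : z ^ 2 = (y + c * t) ^ 2 / (4 * t) := by
    rw [hzdef, div_pow, Real.sq_sqrt (by linarith)]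
  have hXE : X ≤ E := by
    rw [hX, hE, Real.exp_le_exp, hz2]
    have h48 : (y + c * t) ^ 2 / (8 * t) ≤ (y + c * t) ^ 2 / (4 * t) :=
      div_le_div_of_nonneg_left (sq_nonneg _) (by linarith) (by linarith)
    rw [neg_div]
    linarith
  have hzXE : |z| * X ≤ E := by
    refine le_trans (absz_exp z) (le_of_eq ?_)
    rw [hE]
    congr 1
    rw [hz2]
    ring
  have hW : |c / Real.sqrt (4 * t) - z / (2 * t)| ≤ |c| / (2 * Real.sqrt t) + |z| / (2 * t) := by
    rw [sqrt4t t ht0.le]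
    refine le_trans (abs_sub _ _) ?_
    rw [abs_div, abs_div, abs_of_pos (by positivity : (0:ℝ) < 2 * Real.sqrt t),
      abs_of_pos (by positivity : (0:ℝ) < 2 * t)]
  rw [abs_mul, abs_mul, abs_of_nonneg (by positivity), abs_of_nonneg (Real.exp_pos _).le,
    rpow_neg_half t ht0]
  calc (Real.sqrt Real.pi)⁻¹ * X * |c / Real.sqrt (4 * t) - z / (2 * t)|
      ≤ (Real.sqrt Real.pi)⁻¹ * X * (|c| / (2 * Real.sqrt t) + |z| / (2 * t)) := by
        gcongr
    _ = (Real.sqrt Real.pi)⁻¹ * (X * |c| / (2 * Real.sqrt t) + |z| * X / (2 * t)) := by ring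
    _ ≤ (Real.sqrt Real.pi)⁻¹ * (E * |c| / (2 * Real.sqrt t) + E / (2 * t)) := by
        gcongr
        all_goals first
          | exact mul_le_mul_of_nonneg_right hXE (abs_nonneg _)
          | exact hzXE
          | positivity
    _ ≤ (Real.sqrt Real.pi)⁻¹ * (E * |c| / (2 * Real.sqrt t) + E / (2 * Real.sqrt t)) := by
        gcongr
        all_goals first | positivity | linarith
    _ = (Real.sqrt Real.pi)⁻¹ * (|c| + 1) / 2 * (Real.sqrt t)⁻¹ * E := by
        field_simp



lemma hderiv_y (s b : ℝ) (hs : s ≠ 0) (y : ℝ) :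
    HasDerivAt (fun y' => errfn ((y' + b) / s))
      ((Real.sqrt Real.pi)⁻¹ * Real.exp (-(((y + b) / s)) ^ 2) * s⁻¹) y := by
  have hinner : HasDerivAt (fun y' : ℝ => (y' + b) / s) s⁻¹ y := by
    simpa using ((hasDerivAt_id y).add_const b).div_const s
  exact (errfn_hasDerivAt _).comp y hinner

lemma hderiv_t (y c t : ℝ) (ht : 0 < t) :
    HasDerivAt (fun t' => errfn ((y + c * t') / Real.sqrt (4 * t')))
      ((Real.sqrt Real.pi)⁻¹ * Real.exp (-(((y + c * t) / Real.sqrt (4 * t))) ^ 2) *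
        (c / Real.sqrt (4 * t) - ((y + c * t) / Real.sqrt (4 * t)) / (2 * t))) t := by
  have h4t : (0:ℝ) < 4 * t := by linarith
  have hs0 : Real.sqrt (4 * t) ≠ 0 := by positivity
  have hsq : Real.sqrt (4 * t) ^ 2 = 4 * t := Real.sq_sqrt h4t.le
  have hnum : HasDerivAt (fun t' : ℝ => y + c * t') c t := by
    simpa using ((hasDerivAt_id t).const_mul c).const_add y
  have hden : HasDerivAt (fun t' : ℝ => Real.sqrt (4 * t')) (1 / (2 * Real.sqrt (4 * t)) * 4) t := by
    have h1 : HasDerivAt (fun t' : ℝ => 4 * t') 4 t := by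
      simpa using (hasDerivAt_id t).const_mul (4:ℝ)
    exact (Real.hasDerivAt_sqrt h4t.ne').comp t h1
  have hdiv := hnum.div hden hs0
  have hinner : HasDerivAt (fun t' : ℝ => (y + c * t') / Real.sqrt (4 * t'))
      (c / Real.sqrt (4 * t) - ((y + c * t) / Real.sqrt (4 * t)) / (2 * t)) t := by
    refine hdiv.congr_deriv (Eq.symm ?_)
    have key : ∀ s : ℝ, 0 < s → s ^ 2 = 4 * t →
        c / s - ((y + c * t) / s) / (2 * t) =
          (c * s - (y + c * t) * (1 / (2 * s) * 4)) / s ^ 2 := by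
      intro s hs hs2
      have ht' : t = s ^ 2 / 4 := by linarith
      rw [ht']
      field_simp
    exact key _ (Real.sqrt_pos.mpr h4t) hsq
  exact (errfn_hasDerivAt _).comp t hinner

lemma gauss_eLpNorm (t : ℝ) (ht : 0 < t) (c : ℝ) (p : ℝ≥0∞) (hp : 1 ≤ p) :
    eLpNorm (fun y : ℝ => Real.exp (-(y - c) ^ 2 / (8 * t))) p volume
      ≤ ENNReal.ofReal ((8 * Real.pi) * t ^ (2 * p.toReal)⁻¹) := by
  have hpi : (1:ℝ) ≤ 8 * Real.pi := by nlinarith [Real.pi_gt_three]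
  rcases eq_or_ne p ∞ with rfl | hptop
  · rw [eLpNorm_exponent_top]
    refine le_trans (eLpNormEssSup_le_of_ae_bound (C := 1)
      (Filter.Eventually.of_forall fun y => ?_)) ?_
    · rw [Real.norm_eq_abs, abs_of_pos (Real.exp_pos _)]
      refine Real.exp_le_one_iff.mpr ?_
      have := sq_nonneg (y - c)
      have h8 : (0:ℝ) < 8 * t := by linarith
      exact div_nonpos_of_nonpos_of_nonneg (by linarith) h8.le
    · simp only [ENNReal.toReal_top, mul_zero, inv_zero, Real.rpow_zero, mul_one]
      exact ENNReal.ofReal_le_ofReal hpi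
  · have hp0 : p ≠ 0 := by positivity
    set q := p.toReal with hq
    have hq1 : (1:ℝ) ≤ q := by
      rw [hq, ← ENNReal.toReal_one]
      exact ENNReal.toReal_mono hptop hp
    have hq0 : 0 < q := lt_of_lt_of_le one_pos hq1
    have hb : 0 < q / (8 * t) := by positivity
    set g := fun y : ℝ => Real.exp (-(q / (8 * t)) * (y - c) ^ 2) with hg
    have hgint : Integrable g := (integrable_exp_neg_mul_sq hb).comp_sub_right c
    have hI : (∫ y, g y) = Real.sqrt (Real.pi / (q / (8 * t))) := by
      rw [hg]
      rw [show (∫ y : ℝ, Real.exp (-(q / (8 * t)) * (y - c) ^ 2))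
          = ∫ y : ℝ, Real.exp (-(q / (8 * t)) * y ^ 2) from
        integral_sub_right_eq_self (fun y : ℝ => Real.exp (-(q / (8 * t)) * y ^ 2)) c]
      exact integral_gaussian _
    rw [eLpNorm_eq_lintegral_rpow_enorm_toReal hp0 hptop]
    have hlin : (∫⁻ y, ‖Real.exp (-(y - c) ^ 2 / (8 * t))‖ₑ ^ q)
        = ∫⁻ y, ENNReal.ofReal (g y) := by
      congr 1
      ext y
      rw [Real.enorm_eq_ofReal (Real.exp_pos _).le,
        ENNReal.ofReal_rpow_of_pos (Real.exp_pos _), ← Real.exp_mul]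
      congr 2
      ring
    rw [hlin, ← ofReal_integral_eq_lintegral_ofReal hgint
      (Filter.Eventually.of_forall fun y => (Real.exp_pos _).le), hI,
      ENNReal.ofReal_rpow_of_nonneg (Real.sqrt_nonneg _) (by positivity)]
    refine ENNReal.ofReal_le_ofReal ?_
    have h8t : (0:ℝ) ≤ 8 * Real.pi * t := by positivity
    have step1 : Real.sqrt (Real.pi / (q / (8 * t))) ≤ Real.sqrt (8 * Real.pi * t) := by
      refine Real.sqrt_le_sqrt ?_
      rw [div_div_eq_mul_div]
      rw [div_le_iff₀ (by positivity)]
      nlinarith [Real.pi_pos]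
    calc Real.sqrt (Real.pi / (q / (8 * t))) ^ (1 / q)
        ≤ Real.sqrt (8 * Real.pi * t) ^ (1 / q) :=
          Real.rpow_le_rpow (Real.sqrt_nonneg _) step1 (by positivity)
      _ = (8 * Real.pi * t) ^ ((2 * q)⁻¹) := by
          rw [Real.sqrt_eq_rpow, ← Real.rpow_mul h8t]
          congr 1
          field_simp
      _ = (8 * Real.pi) ^ ((2 * q)⁻¹) * t ^ ((2 * q)⁻¹) :=
          Real.mul_rpow (by positivity) ht.le
      _ ≤ (8 * Real.pi) * t ^ ((2 * q)⁻¹) := by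
          refine mul_le_mul_of_nonneg_right ?_ (by positivity)
          calc (8 * Real.pi) ^ ((2 * q)⁻¹) ≤ (8 * Real.pi) ^ (1:ℝ) :=
                Real.rpow_le_rpow_of_exponent_le hpi (by
                  rw [inv_le_one_iff₀]
                  right
                  linarith)
            _ = 8 * Real.pi := Real.rpow_one _


lemma master {n N : ℕ} (c d : Fin N → ℝ) (B t : ℝ) (hB : 0 ≤ B) (ht : 0 < t)
    (p : ℝ≥0∞) (hp : 1 ≤ p) (f : ℝ → EuclideanSpace ℝ (Fin n))
    (hf : ∀ y, ‖f y‖ ≤ B * t ^ (-(1/2) : ℝ) *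
      ∑ k, (Real.exp (-(y - c k) ^ 2 / (8 * t)) + Real.exp (-(y - d k) ^ 2 / (8 * t)))) :
    eLpNorm f p (volume.restrict (Set.Iic (0:ℝ)))
      ≤ ENNReal.ofReal ((B * (16 * N * Real.pi)) * t ^ (-(1/2 : ℝ) * (1 - (p.toReal)⁻¹))) := by
  set τ : ℝ := t ^ (-(1/2) : ℝ) with hτ
  have hτ0 : 0 ≤ τ := Real.rpow_nonneg ht.le _
  set G : ℝ → ℝ := fun y => B * τ *
      ∑ k, (Real.exp (-(y - c k) ^ 2 / (8 * t)) + Real.exp (-(y - d k) ^ 2 / (8 * t))) with hG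
  have h1 : eLpNorm f p (volume.restrict (Set.Iic (0:ℝ))) ≤
      eLpNorm G p (volume.restrict (Set.Iic (0:ℝ))) := by
    refine eLpNorm_mono fun y => ?_
    rw [Real.norm_eq_abs, abs_of_nonneg (by positivity)]
    exact hf y
  have h2 : eLpNorm G p (volume.restrict (Set.Iic (0:ℝ))) ≤ eLpNorm G p volume :=
    eLpNorm_mono_measure _ Measure.restrict_le_self
  have hGsmul : G = (B * τ) • (fun y =>
      ∑ k, (Real.exp (-(y - c k) ^ 2 / (8 * t)) + Real.exp (-(y - d k) ^ 2 / (8 * t)))) := by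
    ext y; simp [hG, mul_assoc]
  have hsumfun : (fun y => ∑ k : Fin N,
        (Real.exp (-(y - c k) ^ 2 / (8 * t)) + Real.exp (-(y - d k) ^ 2 / (8 * t))))
      = ∑ k : Fin N, (fun y =>
        Real.exp (-(y - c k) ^ 2 / (8 * t)) + Real.exp (-(y - d k) ^ 2 / (8 * t))) := by
    ext y; simp
  have hcont : ∀ e : ℝ, Continuous (fun y : ℝ => Real.exp (-(y - e) ^ 2 / (8 * t))) :=
    fun e => by fun_prop
  have h3 : eLpNorm G p volume ≤ ENNReal.ofReal (B * τ) *
      ∑ k : Fin N, eLpNorm (fun y =>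
        Real.exp (-(y - c k) ^ 2 / (8 * t)) + Real.exp (-(y - d k) ^ 2 / (8 * t))) p volume := by
    rw [hGsmul, eLpNorm_const_smul, Real.enorm_eq_ofReal (by positivity)]
    refine mul_le_mul_right ?_ _
    rw [hsumfun]
    exact eLpNorm_sum_le
      (fun k _ => ((hcont (c k)).add (hcont (d k))).aestronglyMeasurable) hp
  have h4 : ∑ k : Fin N, eLpNorm (fun y =>
        Real.exp (-(y - c k) ^ 2 / (8 * t)) + Real.exp (-(y - d k) ^ 2 / (8 * t))) p volume
      ≤ N * (2 * ENNReal.ofReal ((8 * Real.pi) * t ^ (2 * p.toReal)⁻¹)) := by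
    calc _ ≤ ∑ _k : Fin N, (2 * ENNReal.ofReal ((8 * Real.pi) * t ^ (2 * p.toReal)⁻¹)) := by
          refine Finset.sum_le_sum fun k _ => ?_
          refine le_trans (eLpNorm_add_le ((hcont (c k)).aestronglyMeasurable)
            ((hcont (d k)).aestronglyMeasurable) hp) ?_
          rw [two_mul]
          exact add_le_add (gauss_eLpNorm t ht (c k) p hp) (gauss_eLpNorm t ht (d k) p hp)
      _ = N * (2 * ENNReal.ofReal ((8 * Real.pi) * t ^ (2 * p.toReal)⁻¹)) := by
          simp [Finset.sum_const, mul_comm]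
  refine le_trans (le_trans h1 h2) (le_trans h3 ?_)
  refine le_trans (mul_le_mul_right h4 _) ?_
  rw [show ((N : ℝ≥0∞) * (2 * ENNReal.ofReal ((8 * Real.pi) * t ^ (2 * p.toReal)⁻¹)))
      = ENNReal.ofReal ((N : ℝ) * (2 * ((8 * Real.pi) * t ^ (2 * p.toReal)⁻¹))) by
    rw [ENNReal.ofReal_mul (by positivity : (0:ℝ) ≤ (N:ℝ)), ENNReal.ofReal_natCast,
      ENNReal.ofReal_mul (by norm_num : (0:ℝ) ≤ 2), ENNReal.ofReal_ofNat]]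
  rw [← ENNReal.ofReal_mul (by positivity)]
  refine ENNReal.ofReal_le_ofReal (le_of_eq ?_)
  have hexp : (-(1/2:ℝ)) * (1 - (p.toReal)⁻¹) = (-(1/2)) + (2 * p.toReal)⁻¹ := by
    rw [mul_inv]; ring
  rw [hexp, Real.rpow_add ht, hτ]
  ring
theorem stmt0 {n m : ℕ} (hm : 1 ≤ m) (a : Fin m → ℝ) (ha : ∀ k, 0 < a k)
    (l : Fin m → EuclideanSpace ℝ (Fin n)) :
    ∃ C : ℝ, 0 < C ∧ ∀ p : ℝ≥0∞, 1 ≤ p →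
      (∀ t : ℝ, 0 < t →
        eLpNorm (fun y => deriv (fun y' => eKer a l y' t) y) p
            (volume.restrict (Set.Iic (0 : ℝ)))
          ≤ ENNReal.ofReal (C * t ^ (-(1 / 2 : ℝ) * (1 - (p.toReal)⁻¹)))) ∧
      (∀ t : ℝ, 1 ≤ t →
        eLpNorm (fun y => deriv (fun t' => eKer a l y t') t) p
            (volume.restrict (Set.Iic (0 : ℝ)))
          ≤ ENNReal.ofReal (C * t ^ (-(1 / 2 : ℝ) * (1 - (p.toReal)⁻¹)))) := by
  classical
  set B : ℝ := (∑ k, (Real.sqrt Real.pi)⁻¹ * ‖l k‖ * (|a k| + 1) / 2) + 1 with hBdef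
  have hBterm : ∀ k : Fin m, 0 ≤ (Real.sqrt Real.pi)⁻¹ * ‖l k‖ * (|a k| + 1) / 2 := by
    intro k; positivity
  have hsum0 : 0 ≤ ∑ k, (Real.sqrt Real.pi)⁻¹ * ‖l k‖ * (|a k| + 1) / 2 :=
    Finset.sum_nonneg fun k _ => hBterm k
  have hB1 : (1:ℝ) ≤ B := by rw [hBdef]; linarith
  have hB0 : (0:ℝ) < B := by linarith
  have hBk : ∀ k : Fin m, (Real.sqrt Real.pi)⁻¹ * ‖l k‖ * (|a k| + 1) / 2 ≤ B := by
    intro k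
    rw [hBdef]
    have h1 := Finset.single_le_sum (f := fun k : Fin m =>
      (Real.sqrt Real.pi)⁻¹ * ‖l k‖ * (|a k| + 1) / 2) (fun k _ => hBterm k) (Finset.mem_univ k)
    linarith
  refine ⟨B * (16 * (m:ℝ) * Real.pi), ?_, fun p hp => ⟨fun t ht => ?_, fun t ht1 => ?_⟩⟩
  · have hm0 : (0:ℝ) < (m:ℝ) := by exact_mod_cast hm
    exact mul_pos hB0 (mul_pos (mul_pos (by norm_num) hm0) Real.pi_pos)
  -- Part (i) : y-derivative
  · have hs0 : Real.sqrt (4 * t) ≠ 0 := by positivity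
    have hD : ∀ y : ℝ, HasDerivAt (fun y' => eKer a l y' t)
        (∑ k, (((Real.sqrt Real.pi)⁻¹ *
            Real.exp (-(((y + a k * t) / Real.sqrt (4 * t))) ^ 2) * (Real.sqrt (4 * t))⁻¹)
          - ((Real.sqrt Real.pi)⁻¹ *
            Real.exp (-(((y + -(a k * t)) / Real.sqrt (4 * t))) ^ 2) * (Real.sqrt (4 * t))⁻¹))
          • l k) y := by
      intro y
      have hfun : (fun y' => eKer a l y' t) = fun y' => ∑ k,
          (errfn ((y' + a k * t) / Real.sqrt (4 * t))
            - errfn ((y' - a k * t) / Real.sqrt (4 * t))) • l k := rfl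
      rw [hfun]
      refine HasDerivAt.fun_sum fun k _ => HasDerivAt.smul_const ?_ (l k)
      have h1 := hderiv_y (Real.sqrt (4 * t)) (a k * t) hs0 y
      have h2 := hderiv_y (Real.sqrt (4 * t)) (-(a k * t)) hs0 y
      have hfun2 : (fun y' => errfn ((y' + -(a k * t)) / Real.sqrt (4 * t)))
          = fun y' => errfn ((y' - a k * t) / Real.sqrt (4 * t)) := by
        funext y'; rw [← sub_eq_add_neg]
      rw [hfun2] at h2
      exact h1.sub h2
    have hpt : ∀ y : ℝ, ‖deriv (fun y' => eKer a l y' t) y‖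
        ≤ B * t ^ (-(1/2) : ℝ) * ∑ k, (Real.exp (-(y - -(a k * t)) ^ 2 / (8 * t))
          + Real.exp (-(y - a k * t) ^ 2 / (8 * t))) := by
      intro y
      rw [(hD y).deriv]
      refine le_trans (norm_sum_le _ _) ?_
      rw [Finset.mul_sum]
      refine Finset.sum_le_sum fun k _ => ?_
      rw [norm_smul, Real.norm_eq_abs, sub_neg_eq_add, sub_eq_add_neg y (a k * t)]
      have h1 := key_y t ht (a k * t) y
      have h2 := key_y t ht (-(a k * t)) y
      have hcB : (Real.sqrt Real.pi)⁻¹ * ‖l k‖ / 2 ≤ B := by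
        refine le_trans ?_ (hBk k)
        have h3 : (0:ℝ) ≤ (Real.sqrt Real.pi)⁻¹ * ‖l k‖ := by positivity
        nlinarith [abs_nonneg (a k)]
      calc |(Real.sqrt Real.pi)⁻¹ *
            Real.exp (-(((y + a k * t) / Real.sqrt (4 * t))) ^ 2) * (Real.sqrt (4 * t))⁻¹
          - (Real.sqrt Real.pi)⁻¹ *
            Real.exp (-(((y + -(a k * t)) / Real.sqrt (4 * t))) ^ 2) * (Real.sqrt (4 * t))⁻¹|
            * ‖l k‖
          ≤ ((Real.sqrt Real.pi)⁻¹ / 2 * t ^ (-(1/2) : ℝ) *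
              Real.exp (-(y + a k * t) ^ 2 / (8 * t))
            + (Real.sqrt Real.pi)⁻¹ / 2 * t ^ (-(1/2) : ℝ) *
              Real.exp (-(y + -(a k * t)) ^ 2 / (8 * t))) * ‖l k‖ := by
            refine mul_le_mul_of_nonneg_right
              (le_trans (abs_sub _ _) (add_le_add h1 h2)) (norm_nonneg _)
        _ = ((Real.sqrt Real.pi)⁻¹ * ‖l k‖ / 2) * (t ^ (-(1/2) : ℝ) *
              (Real.exp (-(y + a k * t) ^ 2 / (8 * t))
                + Real.exp (-(y + -(a k * t)) ^ 2 / (8 * t)))) := by ring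
        _ ≤ B * (t ^ (-(1/2) : ℝ) * (Real.exp (-(y + a k * t) ^ 2 / (8 * t))
                + Real.exp (-(y + -(a k * t)) ^ 2 / (8 * t)))) := by
            refine mul_le_mul_of_nonneg_right hcB ?_
            have := Real.rpow_nonneg ht.le (-(1/2) : ℝ)
            positivity
        _ = B * t ^ (-(1/2) : ℝ) * (Real.exp (-(y + a k * t) ^ 2 / (8 * t))
                + Real.exp (-(y + -(a k * t)) ^ 2 / (8 * t))) := by ring
    exact master (fun k => -(a k * t)) (fun k => a k * t) B t hB0.le ht p hp _ hpt
  -- Part (ii) : t-derivative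
  · have ht : (0:ℝ) < t := by linarith
    have hD : ∀ y : ℝ, HasDerivAt (fun t' => eKer a l y t')
        (∑ k, (((Real.sqrt Real.pi)⁻¹ *
            Real.exp (-(((y + a k * t) / Real.sqrt (4 * t))) ^ 2) *
            (a k / Real.sqrt (4 * t) - ((y + a k * t) / Real.sqrt (4 * t)) / (2 * t)))
          - ((Real.sqrt Real.pi)⁻¹ *
            Real.exp (-(((y + -(a k) * t) / Real.sqrt (4 * t))) ^ 2) *
            (-(a k) / Real.sqrt (4 * t) - ((y + -(a k) * t) / Real.sqrt (4 * t)) / (2 * t))))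
          • l k) t := by
      intro y
      have hfun : (fun t' => eKer a l y t') = fun t' => ∑ k,
          (errfn ((y + a k * t') / Real.sqrt (4 * t'))
            - errfn ((y - a k * t') / Real.sqrt (4 * t'))) • l k := rfl
      rw [hfun]
      refine HasDerivAt.fun_sum fun k _ => HasDerivAt.smul_const ?_ (l k)
      have h1 := hderiv_t y (a k) t ht
      have h2 := hderiv_t y (-(a k)) t ht
      have hfun2 : (fun t' => errfn ((y + -(a k) * t') / Real.sqrt (4 * t')))
          = fun t' => errfn ((y - a k * t') / Real.sqrt (4 * t')) := by
        funext t'; rw [neg_mul, ← sub_eq_add_neg]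
      rw [hfun2] at h2
      exact h1.sub h2
    have hpt : ∀ y : ℝ, ‖deriv (fun t' => eKer a l y t') t‖
        ≤ B * t ^ (-(1/2) : ℝ) * ∑ k, (Real.exp (-(y - -(a k * t)) ^ 2 / (8 * t))
          + Real.exp (-(y - a k * t) ^ 2 / (8 * t))) := by
      intro y
      rw [(hD y).deriv]
      refine le_trans (norm_sum_le _ _) ?_
      rw [Finset.mul_sum]
      refine Finset.sum_le_sum fun k _ => ?_
      rw [norm_smul, Real.norm_eq_abs, sub_neg_eq_add,
        show y - a k * t = y + -(a k) * t by ring]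
      have h1 := key_t t ht1 (a k) y
      have h2 := key_t t ht1 (-(a k)) y
      rw [abs_neg] at h2
      calc |(Real.sqrt Real.pi)⁻¹ *
            Real.exp (-(((y + a k * t) / Real.sqrt (4 * t))) ^ 2) *
            (a k / Real.sqrt (4 * t) - ((y + a k * t) / Real.sqrt (4 * t)) / (2 * t))
          - (Real.sqrt Real.pi)⁻¹ *
            Real.exp (-(((y + -(a k) * t) / Real.sqrt (4 * t))) ^ 2) *
            (-(a k) / Real.sqrt (4 * t) - ((y + -(a k) * t) / Real.sqrt (4 * t)) / (2 * t))|
            * ‖l k‖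
          ≤ ((Real.sqrt Real.pi)⁻¹ * (|a k| + 1) / 2 * t ^ (-(1/2) : ℝ) *
              Real.exp (-(y + a k * t) ^ 2 / (8 * t))
            + (Real.sqrt Real.pi)⁻¹ * (|a k| + 1) / 2 * t ^ (-(1/2) : ℝ) *
              Real.exp (-(y + -(a k) * t) ^ 2 / (8 * t))) * ‖l k‖ := by
            refine mul_le_mul_of_nonneg_right
              (le_trans (abs_sub _ _) (add_le_add h1 h2)) (norm_nonneg _)
        _ = ((Real.sqrt Real.pi)⁻¹ * ‖l k‖ * (|a k| + 1) / 2) * (t ^ (-(1/2) : ℝ) *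
              (Real.exp (-(y + a k * t) ^ 2 / (8 * t))
                + Real.exp (-(y + -(a k) * t) ^ 2 / (8 * t)))) := by ring
        _ ≤ B * (t ^ (-(1/2) : ℝ) * (Real.exp (-(y + a k * t) ^ 2 / (8 * t))
                + Real.exp (-(y + -(a k) * t) ^ 2 / (8 * t)))) := by
            refine mul_le_mul_of_nonneg_right (hBk k) ?_
            have := Real.rpow_nonneg ht.le (-(1/2) : ℝ)
            positivity
        _ = B * t ^ (-(1/2) : ℝ) * (Real.exp (-(y + a k * t) ^ 2 / (8 * t))
                + Real.exp (-(y + -(a k) * t) ^ 2 / (8 * t))) := by ring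
    exact master (fun k => -(a k * t)) (fun k => a k * t) B t hB0.le ht p hp _ hpt
end

section
/- There exists a constant C > 0 (depending only on m, the speeds a_1,…,a_m and the vectors l_1,…,l_m) such that for every p ∈ [1,∞] and all t ≥ 1, the L^p norm over (−∞,0] of y ↦ ∂_t ∂_y e(y,t) is at most C t^{−(1/2)(1−1/p) − 1/2}. (Here 1/∞ is interpreted as 0.) -/
open MeasureTheory Real Set
open scoped ENNReal

lemma integrable_exp_neg_sq : Integrable (fun u : ℝ => Real.exp (-u ^ 2)) volume := by
  simpa using integrable_exp_neg_mul_sq (b := 1) one_pos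

noncomputable def Ped (c y t : ℝ) : ℝ :=
  (Real.sqrt Real.pi)⁻¹ * Real.exp (-((y + c * t) / Real.sqrt (4 * t)) ^ 2)
    * (Real.sqrt (4 * t))⁻¹

noncomputable def Qf (c y t : ℝ) : ℝ :=
  (Real.sqrt Real.pi)⁻¹ * Real.exp (-((y + c * t) / Real.sqrt (4 * t)) ^ 2) *
    (4 * ((y + c * t) / Real.sqrt (4 * t)) ^ 2 / Real.sqrt (4 * t) ^ 3
     - 2 * c * ((y + c * t) / Real.sqrt (4 * t)) / Real.sqrt (4 * t) ^ 2
     - 2 / Real.sqrt (4 * t) ^ 3)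

lemma sqrt4t_pos {t : ℝ} (ht : 0 < t) : 0 < Real.sqrt (4 * t) :=
  Real.sqrt_pos.2 (by linarith)

lemma hasDerivAt_errfn_comp (b s y : ℝ) (hs : s ≠ 0) :
    HasDerivAt (fun y' => errfn ((y' + b) / s))
      ((Real.sqrt Real.pi)⁻¹ * Real.exp (-((y + b) / s) ^ 2) * s⁻¹) y := by
  have hinner : HasDerivAt (fun y' : ℝ => (y' + b) / s) (1 / s) y := by
    simpa using ((hasDerivAt_id y).add_const b).div_const s
  have := (errfn_hasDerivAt ((y + b) / s)).comp y hinner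
  simpa [Function.comp_def, mul_one_div, div_eq_mul_inv] using this

lemma hasDerivAt_Ped (c y t : ℝ) (ht : 0 < t) :
    HasDerivAt (fun t' => Ped c y t') (Qf c y t) t := by
  have h4t : (0:ℝ) < 4 * t := by linarith
  have hs : Real.sqrt (4 * t) ≠ 0 := (sqrt4t_pos ht).ne'
  have hsq : HasDerivAt (fun t' : ℝ => Real.sqrt (4 * t'))
      (1 / (2 * Real.sqrt (4 * t)) * 4) t := by
    have h1 : HasDerivAt (fun t' : ℝ => 4 * t') 4 t := by
      simpa using (hasDerivAt_id t).const_mul 4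
    exact (Real.hasDerivAt_sqrt h4t.ne').comp t h1
  have hnum : HasDerivAt (fun t' : ℝ => y + c * t') c t := by
    simpa using ((hasDerivAt_id t).const_mul c).const_add y
  have hxi : HasDerivAt (fun t' : ℝ => (y + c * t') / Real.sqrt (4 * t'))
      ((c * Real.sqrt (4 * t) - (y + c * t) * (1 / (2 * Real.sqrt (4 * t)) * 4))
        / Real.sqrt (4 * t) ^ 2) t := hnum.div hsq hs
  have hexp : HasDerivAt
      (fun t' : ℝ => Real.exp (-((y + c * t') / Real.sqrt (4 * t')) ^ 2))
      (Real.exp (-((y + c * t) / Real.sqrt (4 * t)) ^ 2) *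
        (-(2 * ((y + c * t) / Real.sqrt (4 * t)) ^ 1 *
          ((c * Real.sqrt (4 * t) - (y + c * t) * (1 / (2 * Real.sqrt (4 * t)) * 4))
            / Real.sqrt (4 * t) ^ 2)))) t := ((hxi.pow 2).neg).exp
  have hinv : HasDerivAt (fun t' : ℝ => (Real.sqrt (4 * t'))⁻¹)
      (-(1 / (2 * Real.sqrt (4 * t)) * 4) / Real.sqrt (4 * t) ^ 2) t := hsq.inv hs
  have hmain := (hexp.const_mul ((Real.sqrt Real.pi)⁻¹)).mul hinv
  have heq : HasDerivAt (fun t' => Ped c y t')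
      ((Real.sqrt Real.pi)⁻¹ *
          (Real.exp (-((y + c * t) / Real.sqrt (4 * t)) ^ 2) *
            (-(2 * ((y + c * t) / Real.sqrt (4 * t)) ^ 1 *
              ((c * Real.sqrt (4 * t) - (y + c * t) * (1 / (2 * Real.sqrt (4 * t)) * 4))
                / Real.sqrt (4 * t) ^ 2)))) * (Real.sqrt (4 * t))⁻¹ +
        (Real.sqrt Real.pi)⁻¹ * Real.exp (-((y + c * t) / Real.sqrt (4 * t)) ^ 2) *
          (-(1 / (2 * Real.sqrt (4 * t)) * 4) / Real.sqrt (4 * t) ^ 2)) t := by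
    exact hmain
  convert heq using 1
  rw [Qf]
  field_simp
  ring

lemma hasDerivAt_eKer_y {n m : ℕ} (a : Fin m → ℝ) (l : Fin m → EuclideanSpace ℝ (Fin n))
    (y t : ℝ) (ht : 0 < t) :
    HasDerivAt (fun y' => eKer a l y' t)
      (∑ k, (Ped (a k) y t - Ped (-(a k)) y t) • l k) y := by
  unfold eKer
  refine HasDerivAt.fun_sum fun k _ => ?_
  have hs := (sqrt4t_pos ht).ne'
  have hplus := hasDerivAt_errfn_comp (a k * t) (Real.sqrt (4 * t)) y hs
  have hminus := hasDerivAt_errfn_comp (-(a k * t)) (Real.sqrt (4 * t)) y hs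
  have h := (hplus.sub hminus).smul_const (l k)
  simp only [Ped, neg_mul, ← sub_eq_add_neg] at h ⊢
  exact h

lemma deriv_t_deriv_y_eKer {n m : ℕ} (a : Fin m → ℝ) (l : Fin m → EuclideanSpace ℝ (Fin n))
    (y t : ℝ) (ht : 0 < t) :
    deriv (fun t' => deriv (fun y' => eKer a l y' t') y) t
      = ∑ k, (Qf (a k) y t - Qf (-(a k)) y t) • l k := by
  have hev : (fun t' => deriv (fun y' => eKer a l y' t') y)
      =ᶠ[nhds t] (fun t' => ∑ k, (Ped (a k) y t' - Ped (-(a k)) y t') • l k) := by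
    filter_upwards [eventually_gt_nhds ht] with t' ht'
    exact (hasDerivAt_eKer_y a l y t' ht').deriv
  rw [Filter.EventuallyEq.deriv_eq hev]
  exact (HasDerivAt.fun_sum fun k _ =>
    (((hasDerivAt_Ped (a k) y t ht).sub (hasDerivAt_Ped (-(a k)) y t ht)).smul_const
      (l k))).deriv

-- Part 4: bounds
lemma key_exp_bound (z : ℝ) :
    (1 + |z| + z ^ 2) * Real.exp (-z ^ 2) ≤ 3 * Real.exp (-z ^ 2 / 2) := by
  have h1 : 1 + |z| + z ^ 2 ≤ 3 * Real.exp (z ^ 2 / 2) := by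
    nlinarith [Real.add_one_le_exp (z ^ 2 / 2), sq_nonneg (|z| - 1), sq_abs z, abs_nonneg z,
      Real.exp_pos (z ^ 2 / 2)]
  calc (1 + |z| + z ^ 2) * Real.exp (-z ^ 2)
      ≤ 3 * Real.exp (z ^ 2 / 2) * Real.exp (-z ^ 2) :=
        mul_le_mul_of_nonneg_right h1 (Real.exp_nonneg _)
    _ = 3 * Real.exp (-z ^ 2 / 2) := by
        rw [mul_assoc, ← Real.exp_add]; ring_nf

lemma Qf_abs_le (c y t : ℝ) (ht : 1 ≤ t) :
    |Qf c y t| ≤ 3 * (Real.sqrt Real.pi)⁻¹ * (1 + |c|) * t⁻¹ *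
      Real.exp (-((y + c * t) / Real.sqrt (4 * t)) ^ 2 / 2) := by
  have ht0 : 0 < t := lt_of_lt_of_le one_pos ht
  set s := Real.sqrt (4 * t) with hs_def
  set ξ := (y + c * t) / s with hξ_def
  have hs2 : s ^ 2 = 4 * t := Real.sq_sqrt (by linarith)
  have hs_ge : 2 ≤ s := by
    have : Real.sqrt 4 ≤ s := Real.sqrt_le_sqrt (by linarith)
    rwa [show (4:ℝ) = 2 ^ 2 by norm_num, Real.sqrt_sq (by norm_num : (0:ℝ) ≤ 2)] at this
  have hs_pos : 0 < s := by linarith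
  have hs3 : 8 * t ≤ s ^ 3 := by nlinarith
  have hs3_pos : 0 < s ^ 3 := by positivity
  have hA : (0:ℝ) ≤ (Real.sqrt Real.pi)⁻¹ := by positivity
  have hB : |4 * ξ ^ 2 / s ^ 3 - 2 * c * ξ / s ^ 2 - 2 / s ^ 3|
      ≤ (1 + |c|) * (1 + |ξ| + ξ ^ 2) * t⁻¹ := by
    have h1 : |4 * ξ ^ 2 / s ^ 3 - 2 * c * ξ / s ^ 2 - 2 / s ^ 3|
        ≤ 4 * ξ ^ 2 / s ^ 3 + 2 * |c| * |ξ| / s ^ 2 + 2 / s ^ 3 := by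
      have := abs_sub (4 * ξ ^ 2 / s ^ 3 - 2 * c * ξ / s ^ 2) (2 / s ^ 3)
      have h2 : |4 * ξ ^ 2 / s ^ 3 - 2 * c * ξ / s ^ 2|
          ≤ 4 * ξ ^ 2 / s ^ 3 + 2 * |c| * |ξ| / s ^ 2 := by
        refine (abs_sub _ _).trans ?_
        gcongr
        · rw [abs_div, abs_of_nonneg (by positivity : (0:ℝ) ≤ 4 * ξ ^ 2),
            abs_of_pos hs3_pos]
        · rw [abs_div, abs_of_pos (by positivity : (0:ℝ) < s ^ 2)]
          gcongr
          rw [abs_mul, abs_mul]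
          simp [abs_of_nonneg]
      calc |4 * ξ ^ 2 / s ^ 3 - 2 * c * ξ / s ^ 2 - 2 / s ^ 3|
          ≤ |4 * ξ ^ 2 / s ^ 3 - 2 * c * ξ / s ^ 2| + |2 / s ^ 3| := abs_sub _ _
        _ ≤ 4 * ξ ^ 2 / s ^ 3 + 2 * |c| * |ξ| / s ^ 2 + 2 / s ^ 3 := by
            rw [abs_div, abs_of_pos hs3_pos, abs_of_nonneg (by norm_num : (0:ℝ) ≤ 2)]
            linarith
    have e2 : 2 * |c| * |ξ| / s ^ 2 = 2 * |c| * |ξ| / (4 * t) := by rw [hs2]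
    have e1 : 4 * ξ ^ 2 / s ^ 3 ≤ 4 * ξ ^ 2 / (8 * t) :=
      div_le_div_of_nonneg_left (by positivity) (by linarith) hs3
    have e3 : 2 / s ^ 3 ≤ 2 / (8 * t) :=
      div_le_div_of_nonneg_left (by norm_num) (by linarith) hs3
    have ht' : t ≠ 0 := ht0.ne'
    have r1 : 4 * ξ ^ 2 / (8 * t) = ξ ^ 2 / 2 * t⁻¹ := by field_simp; ring
    have r2 : 2 * |c| * |ξ| / (4 * t) = |c| * |ξ| / 2 * t⁻¹ := by field_simp; ring
    have r3 : 2 / (8 * t) = 1 / 4 * t⁻¹ := by field_simp; ring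
    have hfin : 4 * ξ ^ 2 / (8 * t) + 2 * |c| * |ξ| / (4 * t) + 2 / (8 * t)
        ≤ (1 + |c|) * (1 + |ξ| + ξ ^ 2) * t⁻¹ := by
      rw [r1, r2, r3, ← add_mul, ← add_mul]
      refine mul_le_mul_of_nonneg_right ?_ (inv_nonneg.2 ht0.le)
      have hξ2 : ξ ^ 2 = |ξ| ^ 2 := (sq_abs ξ).symm
      nlinarith [abs_nonneg c, abs_nonneg ξ, sq_nonneg ξ,
        mul_nonneg (abs_nonneg c) (abs_nonneg ξ), mul_nonneg (abs_nonneg c) (sq_nonneg ξ)]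
    linarith [h1, e1, e3, (e2 ▸ le_refl (2 * |c| * |ξ| / s ^ 2) : 2 * |c| * |ξ| / s ^ 2 ≤ 2 * |c| * |ξ| / (4 * t))]
  have hQ : |Qf c y t| = (Real.sqrt Real.pi)⁻¹ * Real.exp (-ξ ^ 2) *
      |4 * ξ ^ 2 / s ^ 3 - 2 * c * ξ / s ^ 2 - 2 / s ^ 3| := by
    rw [Qf, abs_mul, abs_mul, abs_of_nonneg hA, abs_of_nonneg (Real.exp_nonneg _)]
  rw [hQ]
  calc (Real.sqrt Real.pi)⁻¹ * Real.exp (-ξ ^ 2) *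
        |4 * ξ ^ 2 / s ^ 3 - 2 * c * ξ / s ^ 2 - 2 / s ^ 3|
      ≤ (Real.sqrt Real.pi)⁻¹ * Real.exp (-ξ ^ 2) *
        ((1 + |c|) * (1 + |ξ| + ξ ^ 2) * t⁻¹) := by
        exact mul_le_mul_of_nonneg_left hB (by positivity)
    _ = (Real.sqrt Real.pi)⁻¹ * (1 + |c|) * t⁻¹ *
        ((1 + |ξ| + ξ ^ 2) * Real.exp (-ξ ^ 2)) := by ring
    _ ≤ (Real.sqrt Real.pi)⁻¹ * (1 + |c|) * t⁻¹ * (3 * Real.exp (-ξ ^ 2 / 2)) := by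
        refine mul_le_mul_of_nonneg_left (key_exp_bound ξ) ?_
        have : (0:ℝ) ≤ 1 + |c| := by positivity
        positivity
    _ = 3 * (Real.sqrt Real.pi)⁻¹ * (1 + |c|) * t⁻¹ * Real.exp (-ξ ^ 2 / 2) := by ring

lemma gauss_integrable (b t : ℝ) (ht : 0 < t) :
    Integrable (fun y => Real.exp (-((y + b) / Real.sqrt (4 * t)) ^ 2 / 2)) volume := by
  have hs2 : Real.sqrt (4 * t) ^ 2 = 4 * t := Real.sq_sqrt (by linarith)
  have hfe : (fun y => Real.exp (-((y + b) / Real.sqrt (4 * t)) ^ 2 / 2))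
      = fun y => Real.exp (-(1 / (8 * t)) * (y + b) ^ 2) := by
    funext y
    congr 1
    rw [div_pow, hs2]
    field_simp
    ring
  rw [hfe]
  exact (integrable_exp_neg_mul_sq (by positivity : (0:ℝ) < 1 / (8 * t))).comp_add_right b

lemma gauss_integral (b t : ℝ) (ht : 0 < t) :
    ∫ y, Real.exp (-((y + b) / Real.sqrt (4 * t)) ^ 2 / 2)
      = Real.sqrt (8 * Real.pi) * Real.sqrt t := by
  have hs2 : Real.sqrt (4 * t) ^ 2 = 4 * t := Real.sq_sqrt (by linarith)
  have hfe : (fun y => Real.exp (-((y + b) / Real.sqrt (4 * t)) ^ 2 / 2))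
      = fun y => Real.exp (-(1 / (8 * t)) * (y + b) ^ 2) := by
    funext y
    congr 1
    rw [div_pow, hs2]
    field_simp
    ring
  rw [hfe]
  rw [integral_add_right_eq_self (fun y => Real.exp (-(1 / (8 * t)) * y ^ 2)) b,
    integral_gaussian]
  rw [show Real.pi / (1 / (8 * t)) = 8 * Real.pi * t by field_simp]
  rw [Real.sqrt_mul (by positivity) t]

lemma real_pow_combine {C t q : ℝ} (hC : 0 < C) (ht : 0 < t) (hq : 0 < q) :
    ((C * t⁻¹) ^ (q - 1) * (C * t ^ (-(1/2) : ℝ))) ^ (1/q)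
      = C * t ^ (-(1/2) * (1 - q⁻¹) - 1/2 : ℝ) := by
  have h1 : C * t⁻¹ = C * t ^ (-1 : ℝ) := by rw [Real.rpow_neg_one]
  have e1 : (C * t ^ (-1:ℝ)) ^ (q - 1) = C ^ (q - 1) * t ^ (-(q - 1)) := by
    rw [Real.mul_rpow hC.le (Real.rpow_nonneg ht.le _), ← Real.rpow_mul ht.le]
    congr 2
    ring
  have e2 : C ^ (q - 1) * t ^ (-(q - 1)) * (C * t ^ (-(1/2):ℝ))
      = C ^ q * t ^ (-(q - 1) + -(1/2) : ℝ) := by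
    rw [show C ^ q = C ^ (q - 1) * C ^ (1:ℝ) by
      rw [← Real.rpow_add hC]; congr 1; ring]
    rw [Real.rpow_one, Real.rpow_add ht]
    ring
  rw [h1, e1, e2, Real.mul_rpow (Real.rpow_nonneg hC.le _) (Real.rpow_nonneg ht.le _),
    ← Real.rpow_mul hC.le, ← Real.rpow_mul ht.le, mul_one_div, div_self hq.ne',
    Real.rpow_one]
  congr 1
  field_simp
  ring

theorem stmt1 {n m : ℕ} (hm : 1 ≤ m) (a : Fin m → ℝ) (ha : ∀ k, 0 < a k)
    (l : Fin m → EuclideanSpace ℝ (Fin n)) :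
    ∃ C : ℝ, 0 < C ∧ ∀ p : ℝ≥0∞, 1 ≤ p → ∀ t : ℝ, 1 ≤ t →
      eLpNorm (fun y => deriv (fun t' => deriv (fun y' => eKer a l y' t') y) t) p
          (volume.restrict (Set.Iic (0 : ℝ)))
        ≤ ENNReal.ofReal (C * t ^ (-(1 / 2 : ℝ) * (1 - (p.toReal)⁻¹) - 1 / 2)) := by
  classical
  set K : ℝ := ∑ k, 3 * (Real.sqrt Real.pi)⁻¹ * (1 + a k) * ‖l k‖ with hK_def
  have hK0 : 0 ≤ K := Finset.sum_nonneg fun k _ => by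
    have := (ha k).le
    positivity
  set C : ℝ := 2 * Real.sqrt (8 * Real.pi) * K + 2 * K + 1 with hC_def
  have hsqrt8pi : (1:ℝ) ≤ Real.sqrt (8 * Real.pi) := by
    rw [show (1:ℝ) = Real.sqrt 1 by simp]
    exact Real.sqrt_le_sqrt (by nlinarith [Real.pi_gt_three])
  have hC0 : 0 < C := by positivity
  refine ⟨C, hC0, ?_⟩
  intro p hp t ht
  have ht0 : 0 < t := lt_of_lt_of_le one_pos ht
  have hfun : (fun y => deriv (fun t' => deriv (fun y' => eKer a l y' t') y) t)
      = fun y => ∑ k, (Qf (a k) y t - Qf (-(a k)) y t) • l k :=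
    funext fun y => deriv_t_deriv_y_eKer a l y t ht0
  rw [hfun]
  set f : ℝ → EuclideanSpace ℝ (Fin n) :=
    fun y => ∑ k, (Qf (a k) y t - Qf (-(a k)) y t) • l k with hf_def
  set G : ℝ → ℝ := fun y => ∑ k, 3 * (Real.sqrt Real.pi)⁻¹ * (1 + a k) * ‖l k‖ *
      (Real.exp (-((y + a k * t) / Real.sqrt (4 * t)) ^ 2 / 2)
       + Real.exp (-((y + -(a k) * t) / Real.sqrt (4 * t)) ^ 2 / 2)) with hG_def
  have hG_nonneg : ∀ y, 0 ≤ G y := fun y => Finset.sum_nonneg fun k _ => by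
    have := (ha k).le
    positivity
  have hpt : ∀ y, ‖f y‖ ≤ t⁻¹ * G y := by
    intro y
    calc ‖f y‖ ≤ ∑ k, ‖(Qf (a k) y t - Qf (-(a k)) y t) • l k‖ := norm_sum_le _ _
      _ ≤ ∑ k, t⁻¹ * (3 * (Real.sqrt Real.pi)⁻¹ * (1 + a k) * ‖l k‖ *
          (Real.exp (-((y + a k * t) / Real.sqrt (4 * t)) ^ 2 / 2)
           + Real.exp (-((y + -(a k) * t) / Real.sqrt (4 * t)) ^ 2 / 2))) := by
          refine Finset.sum_le_sum fun k _ => ?_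
          rw [norm_smul, Real.norm_eq_abs]
          have h1 := Qf_abs_le (a k) y t ht
          have h2 := Qf_abs_le (-(a k)) y t ht
          rw [abs_of_pos (ha k)] at h1
          rw [abs_neg, abs_of_pos (ha k)] at h2
          have hb : |Qf (a k) y t - Qf (-(a k)) y t|
              ≤ 3 * (Real.sqrt Real.pi)⁻¹ * (1 + a k) * t⁻¹ *
                (Real.exp (-((y + a k * t) / Real.sqrt (4 * t)) ^ 2 / 2)
                 + Real.exp (-((y + -(a k) * t) / Real.sqrt (4 * t)) ^ 2 / 2)) := by
            calc |Qf (a k) y t - Qf (-(a k)) y t|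
                ≤ |Qf (a k) y t| + |Qf (-(a k)) y t| := abs_sub _ _
              _ ≤ _ := by rw [mul_add]; exact add_le_add h1 h2
          calc |Qf (a k) y t - Qf (-(a k)) y t| * ‖l k‖
              ≤ 3 * (Real.sqrt Real.pi)⁻¹ * (1 + a k) * t⁻¹ *
                  (Real.exp (-((y + a k * t) / Real.sqrt (4 * t)) ^ 2 / 2)
                   + Real.exp (-((y + -(a k) * t) / Real.sqrt (4 * t)) ^ 2 / 2)) * ‖l k‖ :=
                mul_le_mul_of_nonneg_right hb (norm_nonneg _)
            _ = t⁻¹ * (3 * (Real.sqrt Real.pi)⁻¹ * (1 + a k) * ‖l k‖ *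
                  (Real.exp (-((y + a k * t) / Real.sqrt (4 * t)) ^ 2 / 2)
                   + Real.exp (-((y + -(a k) * t) / Real.sqrt (4 * t)) ^ 2 / 2))) := by ring
      _ = t⁻¹ * G y := by simp only [hG_def]; rw [Finset.mul_sum]
  have hGle : ∀ y, G y ≤ 2 * K := by
    intro y
    simp only [hG_def, hK_def, Finset.mul_sum]
    refine Finset.sum_le_sum fun k _ => ?_
    have hak := (ha k).le
    have he1 : Real.exp (-((y + a k * t) / Real.sqrt (4 * t)) ^ 2 / 2) ≤ 1 :=
      Real.exp_le_one_iff.2 (by nlinarith [sq_nonneg ((y + a k * t) / Real.sqrt (4 * t))])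
    have he2 : Real.exp (-((y + -(a k) * t) / Real.sqrt (4 * t)) ^ 2 / 2) ≤ 1 :=
      Real.exp_le_one_iff.2 (by nlinarith [sq_nonneg ((y + -(a k) * t) / Real.sqrt (4 * t))])
    have hcoef : (0:ℝ) ≤ 3 * (Real.sqrt Real.pi)⁻¹ * (1 + a k) * ‖l k‖ := by positivity
    nlinarith [Real.exp_pos (-((y + a k * t) / Real.sqrt (4 * t)) ^ 2 / 2),
      Real.exp_pos (-((y + -(a k) * t) / Real.sqrt (4 * t)) ^ 2 / 2)]
  have hpoint : ∀ y, ‖f y‖ ≤ C * t⁻¹ := by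
    intro y
    calc ‖f y‖ ≤ t⁻¹ * G y := hpt y
      _ ≤ t⁻¹ * (2 * K) := mul_le_mul_of_nonneg_left (hGle y) (inv_nonneg.2 ht0.le)
      _ ≤ t⁻¹ * C := by
          refine mul_le_mul_of_nonneg_left ?_ (inv_nonneg.2 ht0.le)
          nlinarith
      _ = C * t⁻¹ := mul_comm _ _
  have hGint : Integrable G volume := by
    simp only [hG_def]
    exact integrable_finset_sum _ fun k _ =>
      ((gauss_integrable (a k * t) t ht0).add (gauss_integrable (-(a k) * t) t ht0)).const_mul _
  have hGint_res : Integrable G (volume.restrict (Iic (0:ℝ))) := hGint.restrict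
  have hGIval : ∫ y, G y = K * (2 * (Real.sqrt (8 * Real.pi) * Real.sqrt t)) := by
    simp only [hG_def]
    have hsum := integral_finset_sum (μ := volume) Finset.univ
      (f := fun (k : Fin m) (y : ℝ) => 3 * (Real.sqrt Real.pi)⁻¹ * (1 + a k) * ‖l k‖ *
        (Real.exp (-((y + a k * t) / Real.sqrt (4 * t)) ^ 2 / 2)
         + Real.exp (-((y + -(a k) * t) / Real.sqrt (4 * t)) ^ 2 / 2)))
      (fun k _ =>
        ((gauss_integrable (a k * t) t ht0).add (gauss_integrable (-(a k) * t) t ht0)).const_mul _)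
    rw [hsum, hK_def, Finset.sum_mul]
    refine Finset.sum_congr rfl fun k _ => ?_
    rw [integral_const_mul,
      integral_add (gauss_integrable (a k * t) t ht0) (gauss_integrable (-(a k) * t) t ht0),
      gauss_integral (a k * t) t ht0, gauss_integral (-(a k) * t) t ht0]
    ring
  have hGI_res : ∫ y in Iic (0:ℝ), G y ≤ K * (2 * (Real.sqrt (8 * Real.pi) * Real.sqrt t)) := by
    rw [← hGIval]
    exact integral_mono_measure Measure.restrict_le_self (ae_of_all _ hG_nonneg) hGint
  have hsqt : Real.sqrt t * t⁻¹ = t ^ (-(1/2) : ℝ) := by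
    rw [Real.sqrt_eq_rpow, ← Real.rpow_neg_one t, ← Real.rpow_add ht0]
    norm_num
  have hL1 : ∫⁻ y in Iic (0:ℝ), (‖f y‖₊ : ℝ≥0∞) ∂volume
      ≤ ENNReal.ofReal (C * t ^ (-(1/2) : ℝ)) := by
    have step1 : ∫⁻ y in Iic (0:ℝ), (‖f y‖₊ : ℝ≥0∞) ∂volume
        ≤ ∫⁻ y in Iic (0:ℝ), ENNReal.ofReal (t⁻¹ * G y) ∂volume := by
      refine lintegral_mono fun y => ?_
      rw [← enorm_eq_nnnorm, ← ofReal_norm]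
      exact ENNReal.ofReal_le_ofReal (hpt y)
    have step2 : ∫⁻ y in Iic (0:ℝ), ENNReal.ofReal (t⁻¹ * G y) ∂volume
        = ENNReal.ofReal (∫ y in Iic (0:ℝ), t⁻¹ * G y) := by
      rw [ofReal_integral_eq_lintegral_ofReal (hGint_res.const_mul _)
        (ae_of_all _ fun y => mul_nonneg (inv_nonneg.2 ht0.le) (hG_nonneg y))]
    have step3 : ∫ y in Iic (0:ℝ), t⁻¹ * G y ≤ C * t ^ (-(1/2) : ℝ) := by
      rw [integral_const_mul]
      calc t⁻¹ * ∫ y in Iic (0:ℝ), G y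
          ≤ t⁻¹ * (K * (2 * (Real.sqrt (8 * Real.pi) * Real.sqrt t))) :=
            mul_le_mul_of_nonneg_left hGI_res (inv_nonneg.2 ht0.le)
        _ = (2 * Real.sqrt (8 * Real.pi) * K) * (Real.sqrt t * t⁻¹) := by ring
        _ = (2 * Real.sqrt (8 * Real.pi) * K) * t ^ (-(1/2) : ℝ) := by rw [hsqt]
        _ ≤ C * t ^ (-(1/2) : ℝ) := by
            refine mul_le_mul_of_nonneg_right ?_ (Real.rpow_nonneg ht0.le _)
            nlinarith
    calc ∫⁻ y in Iic (0:ℝ), (‖f y‖₊ : ℝ≥0∞) ∂volume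
        ≤ ∫⁻ y in Iic (0:ℝ), ENNReal.ofReal (t⁻¹ * G y) ∂volume := step1
      _ = ENNReal.ofReal (∫ y in Iic (0:ℝ), t⁻¹ * G y) := step2
      _ ≤ ENNReal.ofReal (C * t ^ (-(1/2) : ℝ)) := ENNReal.ofReal_le_ofReal step3
  rcases eq_or_ne p ⊤ with hptop | hptop
  · subst hptop
    rw [eLpNorm_exponent_top]
    refine (eLpNormEssSup_le_of_ae_bound (ae_of_all _ hpoint)).trans ?_
    refine ENNReal.ofReal_le_ofReal ?_
    rw [ENNReal.toReal_top]
    rw [show -(1/2 : ℝ) * (1 - (0:ℝ)⁻¹) - 1/2 = -1 by norm_num]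
    rw [Real.rpow_neg_one]
  · have hp0 : p ≠ 0 := (lt_of_lt_of_le one_pos hp).ne'
    have hq1 : 1 ≤ p.toReal := by
      rw [← ENNReal.toReal_one]
      exact ENNReal.toReal_mono hptop hp
    have hq0 : 0 < p.toReal := lt_of_lt_of_le one_pos hq1
    rw [eLpNorm_eq_lintegral_rpow_enorm_toReal hp0 hptop]
    have hbd : ∀ y, (‖f y‖₊ : ℝ≥0∞) ≤ ENNReal.ofReal (C * t⁻¹) := fun y => by
      rw [← enorm_eq_nnnorm, ← ofReal_norm]
      exact ENNReal.ofReal_le_ofReal (hpoint y)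
    have hstep : ∫⁻ y in Iic (0:ℝ), (‖f y‖₊ : ℝ≥0∞) ^ p.toReal ∂volume
        ≤ ENNReal.ofReal (C * t⁻¹) ^ (p.toReal - 1)
            * ENNReal.ofReal (C * t ^ (-(1/2) : ℝ)) := by
      calc ∫⁻ y in Iic (0:ℝ), (‖f y‖₊ : ℝ≥0∞) ^ p.toReal ∂volume
          ≤ ∫⁻ y in Iic (0:ℝ),
              ENNReal.ofReal (C * t⁻¹) ^ (p.toReal - 1) * (‖f y‖₊ : ℝ≥0∞) ∂volume := by
            refine lintegral_mono fun y => ?_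
            have hsplit : (‖f y‖₊ : ℝ≥0∞) ^ p.toReal
                = (‖f y‖₊ : ℝ≥0∞) ^ (p.toReal - 1) * (‖f y‖₊ : ℝ≥0∞) ^ (1:ℝ) := by
              rw [← ENNReal.rpow_add_of_nonneg (p.toReal - 1) 1 (by linarith) zero_le_one]
              norm_num
            rw [hsplit, ENNReal.rpow_one]
            exact mul_le_mul_left (ENNReal.rpow_le_rpow (hbd y) (by linarith)) _
        _ = ENNReal.ofReal (C * t⁻¹) ^ (p.toReal - 1)
              * ∫⁻ y in Iic (0:ℝ), (‖f y‖₊ : ℝ≥0∞) ∂volume :=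
            lintegral_const_mul' _ _
              (ENNReal.rpow_ne_top_of_nonneg (by linarith) ENNReal.ofReal_ne_top)
        _ ≤ _ := mul_le_mul_right hL1 _
    have hXpos : (0:ℝ) < C * t⁻¹ := by positivity
    have hYpos : (0:ℝ) < C * t ^ (-(1/2) : ℝ) := by
      have := Real.rpow_pos_of_pos ht0 (-(1/2) : ℝ)
      positivity
    calc (∫⁻ y in Iic (0:ℝ), (‖f y‖₊ : ℝ≥0∞) ^ p.toReal ∂volume) ^ (1 / p.toReal)
        ≤ (ENNReal.ofReal (C * t⁻¹) ^ (p.toReal - 1)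
            * ENNReal.ofReal (C * t ^ (-(1/2) : ℝ))) ^ (1 / p.toReal) :=
          ENNReal.rpow_le_rpow hstep (by positivity)
      _ = ENNReal.ofReal (((C * t⁻¹) ^ (p.toReal - 1)
            * (C * t ^ (-(1/2) : ℝ))) ^ (1 / p.toReal)) := by
          rw [ENNReal.ofReal_rpow_of_pos hXpos,
            ← ENNReal.ofReal_mul (Real.rpow_nonneg hXpos.le _),
            ENNReal.ofReal_rpow_of_pos
              (mul_pos (Real.rpow_pos_of_pos hXpos _) hYpos)]
      _ = ENNReal.ofReal (C * t ^ (-(1/2 : ℝ) * (1 - (p.toReal)⁻¹) - 1/2)) := by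
          rw [real_pow_combine hC0 ht0 hq0]
      _ ≤ _ := le_refl _
end

section
/- Fix constants a > 0, b ≠ 0, and M, η > 0. For t > 0 define the kernel K_t(x,y) := 1_{{a t ≥ |y|}} · t^{−1/2} e^{−(x − b(t − |y|/a))²/(M t)} · e^{−η max(x,0)} for x ∈ ℝ and y ≤ 0. Then for every pair of exponents 1 ≤ q ≤ p ≤ ∞ there exists C > 0 such that for all t > 0 and all f ∈ L^q((−∞,0]), ‖∫_{−∞}^0 K_t(·,y) f(y) dy‖_{L^p(ℝ)} ≤ C t^{−(1/2)(1/q − 1/p)} ‖f‖_{L^q((−∞,0])}. -/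
open MeasureTheory Real Set
open scoped ENNReal

section Helpers

lemma lint_affine {c : ℝ} (hc : c ≠ 0) (d : ℝ) (φ : ℝ → ℝ≥0∞) (hφ : Measurable φ) :
    ∫⁻ y : ℝ, φ (d - c * y) = ENNReal.ofReal |c|⁻¹ * ∫⁻ z, φ z := by
  have h1 : ∀ y : ℝ, d - c * y = d + (-c) * y := fun y => by ring
  simp_rw [h1]
  have hψ : Measurable fun v : ℝ => φ (d + v) := hφ.comp (measurable_const.add measurable_id)
  have hm := lintegral_map (μ := volume) hψ (measurable_const_mul (-c))
  calc ∫⁻ y : ℝ, φ (d + (-c) * y)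
      = ∫⁻ v, φ (d + v) ∂(Measure.map ((-c) * ·) volume) := by
        rw [hm]
    _ = ENNReal.ofReal |c|⁻¹ * ∫⁻ v : ℝ, φ (d + v) := by
        rw [Real.map_volume_mul_left (neg_ne_zero.2 hc), lintegral_smul_measure]
        simp [abs_inv]
    _ = ENNReal.ofReal |c|⁻¹ * ∫⁻ z, φ z := by
        rw [lintegral_add_left_eq_self φ d]

lemma gauss_lint (M t R : ℝ) (hM : 0 < M) (ht : 0 < t) (hR : 0 < R) :
    ∫⁻ z : ℝ, (ENNReal.ofReal (t ^ (-(1/2) : ℝ) * Real.exp (-z ^ 2 / (M * t)))) ^ R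
      = ENNReal.ofReal (t ^ (-(1/2) * R) * Real.sqrt (π * (M * t) / R)) := by
  have hpt : ∀ z : ℝ, (ENNReal.ofReal (t ^ (-(1/2) : ℝ) * Real.exp (-z ^ 2 / (M * t)))) ^ R
      = ENNReal.ofReal (t ^ (-(1/2) * R) * Real.exp (-(R / (M * t)) * z ^ 2)) := by
    intro z
    rw [ENNReal.ofReal_rpow_of_nonneg (by positivity) hR.le]
    congr 1
    rw [Real.mul_rpow (by positivity) (exp_pos _).le, Real.rpow_mul ht.le, ← Real.exp_mul]
    congr 1
    ring
  simp_rw [hpt]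
  rw [← ofReal_integral_eq_lintegral_ofReal
      ((integrable_exp_neg_mul_sq (by positivity : (0:ℝ) < R / (M * t))).const_mul _)
      (Filter.Eventually.of_forall fun z => by positivity)]
  congr 1
  rw [MeasureTheory.integral_const_mul, integral_gaussian]
  congr 2
  field_simp

lemma gauss_norm (M t R : ℝ) (hM : 0 < M) (ht : 0 < t) (hR : 0 < R) :
    (∫⁻ z : ℝ, (ENNReal.ofReal (t ^ (-(1/2) : ℝ) * Real.exp (-z ^ 2 / (M * t)))) ^ R) ^ (1/R)
      = ENNReal.ofReal ((π * M / R) ^ ((1:ℝ)/(2*R)) * t ^ (-(1/2) * (1 - 1/R))) := by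
  rw [gauss_lint M t R hM ht hR,
    ENNReal.ofReal_rpow_of_nonneg (by positivity) (by positivity)]
  congr 1
  rw [Real.sqrt_eq_rpow, Real.mul_rpow (by positivity) (by positivity),
    ← Real.rpow_mul ht.le, ← Real.rpow_mul (by positivity)]
  have h1 : π * (M * t) / R = (π * M / R) * t := by ring
  rw [h1, Real.mul_rpow (by positivity) ht.le]
  rw [(by field_simp : (-(1/2) * R * (1/R) : ℝ) = -(1/2))]
  rw [(by ring : ((1/2) * (1/R) : ℝ) = 1/(2*R))]
  rw [mul_comm (t ^ (-(1/2) : ℝ)), mul_assoc, ← Real.rpow_add ht]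
  congr 2
  field_simp
  ring

lemma young_core {c : ℝ} (hc : c ≠ 0) (φ g : ℝ → ℝ≥0∞) (hφ : Measurable φ) (hg : Measurable g)
    {P Q R : ℝ} (hP : 0 < P) (hQ : 0 < Q) (hR : 0 < R)
    (hw1 : (0:ℝ) ≤ 1/R - 1/P) (hw2 : (0:ℝ) ≤ 1/Q - 1/P)
    (hsum : 1/R + 1/Q - 1/P = 1) :
    ∫⁻ x : ℝ, (∫⁻ y : ℝ, φ (x - c * y) * g y) ^ P ≤
      ((∫⁻ z, φ z ^ R) ^ (1/R) * (∫⁻ z, g z ^ Q) ^ (1/Q) *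
        ENNReal.ofReal (|c|⁻¹ ^ (1/R - 1/P))) ^ P := by
  have hcinv : (0:ℝ) < |c|⁻¹ := by positivity
  set A := ∫⁻ z, φ z ^ R with hA
  set B := ∫⁻ z, g z ^ Q with hB
  have hφR : Measurable fun z => φ z ^ R := hφ.pow_const R
  have hgQ : Measurable fun z => g z ^ Q := hg.pow_const Q
  by_cases hA0 : A = 0
  · have hφ0 : ∫⁻ z, φ z = 0 := by
      rw [lintegral_eq_zero_iff hφ]
      filter_upwards [(lintegral_eq_zero_iff hφR).mp hA0] with z hz
      have : φ z ^ R = 0 := hz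
      rcases (ENNReal.rpow_eq_zero_iff).mp this with ⟨h, _⟩ | ⟨_, h⟩
      · exact h
      · linarith
    have hx : ∀ x : ℝ, (∫⁻ y, φ (x - c * y) * g y) = 0 := by
      intro x
      have hm : Measurable fun y : ℝ => φ (x - c * y) :=
        hφ.comp (measurable_const.sub (measurable_id.const_mul c))
      have h2 : ∫⁻ y, φ (x - c * y) = 0 := by
        rw [lint_affine hc x φ hφ, hφ0, mul_zero]
      rw [lintegral_eq_zero_iff (f := fun y => φ (x - c * y) * g y) (hm.mul hg)]
      filter_upwards [(lintegral_eq_zero_iff hm).mp h2] with y hy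
      simp only [Pi.zero_apply] at hy ⊢
      rw [hy, zero_mul]
    simp_rw [hx]
    simp [ENNReal.zero_rpow_of_pos hP]
  by_cases hB0 : B = 0
  · have hg0 : g =ᵐ[volume] 0 := by
      filter_upwards [(lintegral_eq_zero_iff hgQ).mp hB0] with z hz
      have : g z ^ Q = 0 := hz
      rcases (ENNReal.rpow_eq_zero_iff).mp this with ⟨h, _⟩ | ⟨_, h⟩
      · exact h
      · linarith
    have hx : ∀ x : ℝ, (∫⁻ y, φ (x - c * y) * g y) = 0 := by
      intro x
      have hm : Measurable fun y : ℝ => φ (x - c * y) :=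
        hφ.comp (measurable_const.sub (measurable_id.const_mul c))
      rw [lintegral_eq_zero_iff (f := fun y => φ (x - c * y) * g y) (hm.mul hg)]
      filter_upwards [hg0] with y hy
      simp only [Pi.zero_apply] at hy ⊢
      rw [hy, mul_zero]
    simp_rw [hx]
    simp [ENNReal.zero_rpow_of_pos hP]
  have hofc : ENNReal.ofReal (|c|⁻¹ ^ (1/R - 1/P)) ≠ 0 := by
    simp only [Ne, ENNReal.ofReal_eq_zero, not_le]
    positivity
  by_cases hAtop : A = ⊤
  · refine le_top.trans_eq ?_
    have h1 : A ^ ((1:ℝ)/R) = ⊤ := by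
      rw [hAtop]; exact ENNReal.top_rpow_of_pos (by positivity)
    have h2 : B ^ ((1:ℝ)/Q) ≠ 0 := by
      rw [Ne, ENNReal.rpow_eq_zero_iff]
      rintro (⟨h, _⟩ | ⟨_, h⟩)
      · exact hB0 h
      · have : (0:ℝ) < 1/Q := by positivity
        linarith
    rw [h1, ENNReal.top_mul h2, ENNReal.top_mul hofc, ENNReal.top_rpow_of_pos hP]
  by_cases hBtop : B = ⊤
  · refine le_top.trans_eq ?_
    have h1 : B ^ ((1:ℝ)/Q) = ⊤ := by
      rw [hBtop]; exact ENNReal.top_rpow_of_pos (by positivity)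
    have h2 : A ^ ((1:ℝ)/R) ≠ 0 := by
      rw [Ne, ENNReal.rpow_eq_zero_iff]
      rintro (⟨h, _⟩ | ⟨_, h⟩)
      · exact hA0 h
      · have : (0:ℝ) < 1/R := by positivity
        linarith
    rw [h1, ENNReal.mul_top h2, ENNReal.top_mul hofc, ENNReal.top_rpow_of_pos hP]
  -- main case
  set u := ENNReal.ofReal |c|⁻¹ with hu
  set A' := u * A with hA'
  have hA'top : A' ≠ ⊤ := ENNReal.mul_ne_top ENNReal.ofReal_ne_top hAtop
  have key : ∀ x : ℝ, (∫⁻ y, φ (x - c * y) * g y) ≤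
      (∫⁻ y, φ (x - c * y) ^ R * g y ^ Q) ^ ((1:ℝ)/P) * A' ^ (1/R - 1/P) * B ^ (1/Q - 1/P) := by
    intro x
    have hm : Measurable fun y : ℝ => φ (x - c * y) :=
      hφ.comp (measurable_const.sub (measurable_id.const_mul c))
    have hrw : ∀ y : ℝ, φ (x - c * y) * g y
        = (φ (x - c * y) ^ R * g y ^ Q) ^ ((1:ℝ)/P) * (φ (x - c * y) ^ R) ^ (1/R - 1/P)
            * (g y ^ Q) ^ (1/Q - 1/P) := by
      intro y
      generalize φ (x - c * y) = v₁
      generalize g y = v₂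
      rw [ENNReal.mul_rpow_of_nonneg _ _ (by positivity : (0:ℝ) ≤ 1/P),
        ← ENNReal.rpow_mul, ← ENNReal.rpow_mul, ← ENNReal.rpow_mul, ← ENNReal.rpow_mul,
        mul_assoc, mul_mul_mul_comm,
        ← ENNReal.rpow_add_of_nonneg _ _ (by positivity) (mul_nonneg hR.le hw1),
        ← ENNReal.rpow_add_of_nonneg _ _ (by positivity) (mul_nonneg hQ.le hw2),
        (by field_simp; ring : R * (1/P) + R * (1/R - 1/P) = 1),
        (by field_simp; ring : Q * (1/P) + Q * (1/Q - 1/P) = 1),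
        ENNReal.rpow_one, ENNReal.rpow_one]
    calc (∫⁻ y, φ (x - c * y) * g y)
        = ∫⁻ y, (φ (x - c * y) ^ R * g y ^ Q) ^ ((1:ℝ)/P) * (φ (x - c * y) ^ R) ^ (1/R - 1/P)
            * (g y ^ Q) ^ (1/Q - 1/P) := by simp_rw [hrw]
      _ ≤ (∫⁻ y, φ (x - c * y) ^ R * g y ^ Q) ^ ((1:ℝ)/P) * (∫⁻ y, φ (x - c * y) ^ R) ^ (1/R - 1/P)
            * (∫⁻ y, g y ^ Q) ^ (1/Q - 1/P) := by
          have H := ENNReal.lintegral_prod_norm_pow_le (μ := (volume : Measure ℝ))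
            (Finset.univ : Finset (Fin 3))
            (f := ![fun y => φ (x - c * y) ^ R * g y ^ Q,
                    fun y => φ (x - c * y) ^ R, fun y => g y ^ Q])
            (p := ![1/P, 1/R - 1/P, 1/Q - 1/P])
            (fun i _ => by
              fin_cases i
              · exact ((hm.pow_const R).mul (hg.pow_const Q)).aemeasurable
              · exact (hm.pow_const R).aemeasurable
              · exact (hg.pow_const Q).aemeasurable)
            (by
              simp only [Fin.sum_univ_three, Matrix.cons_val_zero, Matrix.cons_val_one,
                Matrix.head_cons, Matrix.cons_val_two, Matrix.tail_cons]
              linarith [hsum])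
            (fun i _ => by
              fin_cases i
              · simpa using (by positivity : (0:ℝ) ≤ 1/P)
              · simpa using hw1
              · simpa using hw2)
          simpa [Fin.prod_univ_three] using H
      _ = (∫⁻ y, φ (x - c * y) ^ R * g y ^ Q) ^ ((1:ℝ)/P) * A' ^ (1/R - 1/P)
            * B ^ (1/Q - 1/P) := by
          rw [lint_affine hc x (fun z => φ z ^ R) hφR]
  have key2 : ∀ x : ℝ, (∫⁻ y, φ (x - c * y) * g y) ^ P ≤
      (∫⁻ y, φ (x - c * y) ^ R * g y ^ Q) * (A' ^ ((1:ℝ)/R - 1/P) * B ^ ((1:ℝ)/Q - 1/P)) ^ P := by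
    intro x
    calc (∫⁻ y, φ (x - c * y) * g y) ^ P
        ≤ ((∫⁻ y, φ (x - c * y) ^ R * g y ^ Q) ^ ((1:ℝ)/P) * A' ^ ((1:ℝ)/R - 1/P)
            * B ^ ((1:ℝ)/Q - 1/P)) ^ P := ENNReal.rpow_le_rpow (key x) hP.le
      _ = _ := by
          rw [mul_assoc, ENNReal.mul_rpow_of_nonneg _ _ hP.le, ← ENNReal.rpow_mul,
            one_div, inv_mul_cancel₀ hP.ne', ENNReal.rpow_one]
  have hKtop : (A' ^ ((1:ℝ)/R - 1/P) * B ^ ((1:ℝ)/Q - 1/P)) ^ P ≠ ⊤ :=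
    ENNReal.rpow_ne_top_of_nonneg hP.le
      (ENNReal.mul_ne_top (ENNReal.rpow_ne_top_of_nonneg hw1 hA'top)
        (ENNReal.rpow_ne_top_of_nonneg hw2 hBtop))
  have swap : ∫⁻ x : ℝ, ∫⁻ y : ℝ, φ (x - c * y) ^ R * g y ^ Q = A * B := by
    rw [lintegral_lintegral_swap
      (((hφ.comp (measurable_fst.sub (measurable_snd.const_mul c))).pow_const R).mul
        ((hg.comp measurable_snd).pow_const Q)).aemeasurable]
    have h1 : ∀ y : ℝ, ∫⁻ x : ℝ, φ (x - c * y) ^ R * g y ^ Q = A * g y ^ Q := by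
      intro y
      have hmx : Measurable fun x : ℝ => φ (x - c * y) ^ R :=
        (hφ.comp (measurable_id.sub measurable_const)).pow_const R
      rw [lintegral_mul_const _ hmx]
      congr 1
      simp_rw [sub_eq_add_neg]
      exact lintegral_add_right_eq_self (fun z => φ z ^ R) (-(c * y))
    simp_rw [h1]
    rw [lintegral_const_mul A hgQ]
  calc ∫⁻ x : ℝ, (∫⁻ y : ℝ, φ (x - c * y) * g y) ^ P
      ≤ ∫⁻ x : ℝ, (∫⁻ y, φ (x - c * y) ^ R * g y ^ Q)
          * (A' ^ ((1:ℝ)/R - 1/P) * B ^ ((1:ℝ)/Q - 1/P)) ^ P := lintegral_mono key2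
    _ = A * B * (A' ^ ((1:ℝ)/R - 1/P) * B ^ ((1:ℝ)/Q - 1/P)) ^ P := by
        rw [lintegral_mul_const' _ _ hKtop, swap]
    _ = (A ^ ((1:ℝ)/R) * B ^ ((1:ℝ)/Q) * ENNReal.ofReal (|c|⁻¹ ^ (1/R - 1/P))) ^ P := by
        rw [← ENNReal.ofReal_rpow_of_nonneg hcinv.le hw1]
        rw [ENNReal.mul_rpow_of_nonneg (A' ^ ((1:ℝ)/R - 1/P)) _ hP.le,
          ← ENNReal.rpow_mul A', ← ENNReal.rpow_mul B, hA',
          ENNReal.mul_rpow_of_nonneg u A (mul_nonneg hw1 hP.le)]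
        rw [ENNReal.mul_rpow_of_nonneg _ (u ^ ((1:ℝ)/R - 1/P)) hP.le,
          ENNReal.mul_rpow_of_nonneg _ _ hP.le,
          ← ENNReal.rpow_mul A, ← ENNReal.rpow_mul B, ← ENNReal.rpow_mul u]
        rw [(by field_simp; ring : ((1:ℝ)/R) * P = (1/R - 1/P) * P + 1),
          (by field_simp; ring : ((1:ℝ)/Q) * P = (1/Q - 1/P) * P + 1),
          ENNReal.rpow_add_of_nonneg _ _ (mul_nonneg hw1 hP.le) zero_le_one,
          ENNReal.rpow_add_of_nonneg _ _ (mul_nonneg hw2 hP.le) zero_le_one,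
          ENNReal.rpow_one, ENNReal.rpow_one]
        ring

lemma keybound {a b M η : ℝ} (ha : 0 < a) (hM : 0 < M) (hη : 0 < η) {t : ℝ} (ht : 0 < t)
    (f : ℝ → ℝ) (G : ℝ → ℝ≥0∞)
    (hG : (fun y => (‖f y‖₊ : ℝ≥0∞)) =ᵐ[volume.restrict (Set.Iic (0:ℝ))] G) (x : ℝ) :
    (‖∫ y in Set.Iic (0:ℝ),
        (if |y| ≤ a * t then
          t ^ (-(1 / 2) : ℝ) * Real.exp (-(x - b * (t - |y| / a)) ^ 2 / (M * t))
            * Real.exp (-η * max x 0)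
        else 0) * f y‖₊ : ℝ≥0∞)
      ≤ ∫⁻ y, ENNReal.ofReal (t ^ (-(1/2) : ℝ) * Real.exp (-(x - b / a * y - b * t) ^ 2 / (M * t)))
          * (Set.Iic (0:ℝ)).indicator G y := by
  set K : ℝ → ℝ := fun y => (if |y| ≤ a * t then
      t ^ (-(1 / 2) : ℝ) * Real.exp (-(x - b * (t - |y| / a)) ^ 2 / (M * t))
        * Real.exp (-η * max x 0) else 0) with hK
  set φv : ℝ → ℝ := fun y => t ^ (-(1/2) : ℝ) * Real.exp (-(x - b / a * y - b * t) ^ 2 / (M * t))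
    with hφv
  have habs : ∀ y : ℝ, y ≤ 0 → |K y| ≤ φv y := by
    intro y hy
    have harg : x - b * (t - |y| / a) = x - b / a * y - b * t := by
      rw [abs_of_nonpos hy]
      field_simp
      ring
    by_cases hcase : |y| ≤ a * t
    · simp only [hK, if_pos hcase, harg]
      rw [abs_of_nonneg (by positivity)]
      have h1 : Real.exp (-η * max x 0) ≤ 1 := by
        rw [Real.exp_le_one_iff]
        have : 0 ≤ max x 0 := le_max_right _ _
        nlinarith
      calc t ^ (-(1 / 2) : ℝ) * Real.exp (-(x - b / a * y - b * t) ^ 2 / (M * t))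
            * Real.exp (-η * max x 0)
          ≤ t ^ (-(1 / 2) : ℝ) * Real.exp (-(x - b / a * y - b * t) ^ 2 / (M * t)) * 1 := by
            apply mul_le_mul_of_nonneg_left h1 (by positivity)
        _ = φv y := by rw [mul_one]
    · simp only [hK, if_neg hcase, abs_zero]
      positivity
  calc (‖∫ y in Set.Iic (0:ℝ), K y * f y‖₊ : ℝ≥0∞)
      ≤ ∫⁻ y in Set.Iic (0:ℝ), ‖K y * f y‖₊ := enorm_integral_le_lintegral_enorm _
    _ ≤ ∫⁻ y in Set.Iic (0:ℝ), ENNReal.ofReal (φv y) * G y := by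
        apply lintegral_mono_ae
        filter_upwards [ae_restrict_mem measurableSet_Iic, hG] with y hy hGy
        rw [nnnorm_mul, ENNReal.coe_mul, ← hGy]
        apply mul_le_mul_left
        rw [← enorm_eq_nnnorm, ← ofReal_norm_eq_enorm, Real.norm_eq_abs]
        exact ENNReal.ofReal_le_ofReal (habs y hy)
    _ = ∫⁻ y, ENNReal.ofReal (φv y) * (Set.Iic (0:ℝ)).indicator G y := by
        rw [← lintegral_indicator measurableSet_Iic]
        congr 1
        ext y
        exact Set.indicator_mul_right _ (fun y => ENNReal.ofReal (φv y)) G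

end Helpers

theorem stmt6 (a b M η : ℝ) (ha : 0 < a) (hb : b ≠ 0) (hM : 0 < M) (hη : 0 < η) :
    ∀ p q : ℝ≥0∞, 1 ≤ q → q ≤ p →
      ∃ C : ℝ, 0 < C ∧ ∀ t : ℝ, 0 < t →
        ∀ f : ℝ → ℝ, MemLp f q (volume.restrict (Set.Iic (0 : ℝ))) →
          eLpNorm (fun x => ∫ y in Set.Iic (0 : ℝ),
              (if |y| ≤ a * t then
                t ^ (-(1 / 2) : ℝ) * Real.exp (-(x - b * (t - |y| / a)) ^ 2 / (M * t))
                  * Real.exp (-η * max x 0)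
              else 0) * f y) p volume
            ≤ ENNReal.ofReal (C * t ^ (-(1 / 2 : ℝ) * (q.toReal⁻¹ - p.toReal⁻¹)))
              * eLpNorm f q (volume.restrict (Set.Iic (0 : ℝ))) := by
  intro p q hq hqp
  have hc : b / a ≠ 0 := div_ne_zero hb ha.ne'
  have hcpos : (0:ℝ) < |b / a|⁻¹ := by positivity
  by_cases hqtop : q = ⊤
  · -- q = ⊤, hence p = ⊤
    subst hqtop
    have hptop : p = ⊤ := top_le_iff.mp hqp
    subst hptop
    refine ⟨Real.sqrt (π * M) * |b / a|⁻¹, by positivity, ?_⟩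
    intro t ht f hf
    obtain ⟨G, hGm, hG⟩ := hf.1.enorm
    set g : ℝ → ℝ≥0∞ := (Set.Iic (0:ℝ)).indicator G with hgdef
    set φ : ℝ → ℝ≥0∞ :=
      fun z => ENNReal.ofReal (t ^ (-(1/2):ℝ) * Real.exp (-(z - b*t)^2/(M*t))) with hφdef
    have hφm : Measurable φ := by
      apply ENNReal.measurable_ofReal.comp
      exact (measurable_const.mul (Real.measurable_exp.comp
        ((((measurable_id.sub measurable_const).pow_const 2).neg).div_const _)))
    set S := eLpNorm f ⊤ (volume.restrict (Set.Iic (0:ℝ))) with hSdef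
    by_cases hS : S = ⊤
    · rw [hS, ENNReal.mul_top (ENNReal.ofReal_pos.mpr (by positivity)).ne']
      exact le_top
    have hgle : ∀ᵐ y ∂(volume : Measure ℝ), g y ≤ S := by
      have h1 : ∀ᵐ y ∂(volume.restrict (Set.Iic (0:ℝ))), G y ≤ S := by
        filter_upwards [hG,
          ENNReal.ae_le_essSup (μ := volume.restrict (Set.Iic (0:ℝ)))
            (fun y => (‖f y‖₊ : ℝ≥0∞))] with y h1 h2
        rw [← h1]
        rw [hSdef, eLpNorm_exponent_top]
        exact h2
      rw [ae_restrict_iff' measurableSet_Iic] at h1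
      filter_upwards [h1] with y hy
      by_cases hmem : y ∈ Set.Iic (0:ℝ)
      · rw [hgdef, Set.indicator_of_mem hmem]; exact hy hmem
      · rw [hgdef, Set.indicator_of_notMem hmem]; exact zero_le
    have hA1 : ∫⁻ z, φ z = ENNReal.ofReal (t ^ (-(1/2)*1 : ℝ) * Real.sqrt (π * (M * t) / 1)) := by
      have htrans : ∫⁻ z, φ z
          = ∫⁻ z, ENNReal.ofReal (t ^ (-(1/2):ℝ) * Real.exp (-z^2/(M*t))) := by
        simp_rw [hφdef, sub_eq_add_neg]
        exact lintegral_add_right_eq_self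
          (fun z => ENNReal.ofReal (t ^ (-(1/2):ℝ) * Real.exp (-z^2/(M*t)))) (-(b*t))
      have h2 := gauss_lint M t 1 hM ht one_pos
      simp only [ENNReal.rpow_one] at h2
      rw [htrans, h2]
    have hx : ∀ x : ℝ, (‖∫ y in Set.Iic (0:ℝ),
        (if |y| ≤ a * t then
          t ^ (-(1 / 2) : ℝ) * Real.exp (-(x - b * (t - |y| / a)) ^ 2 / (M * t))
            * Real.exp (-η * max x 0)
        else 0) * f y‖₊ : ℝ≥0∞)
        ≤ ENNReal.ofReal (Real.sqrt (π * M) * |b / a|⁻¹ *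
            t ^ (-(1 / 2 : ℝ) * ((⊤:ℝ≥0∞).toReal⁻¹ - (⊤:ℝ≥0∞).toReal⁻¹))) * S := by
      intro x
      calc (‖∫ y in Set.Iic (0:ℝ), _ * f y‖₊ : ℝ≥0∞)
          ≤ ∫⁻ y, φ (x - b / a * y) * g y := keybound ha hM hη ht f G hG x
        _ ≤ ∫⁻ y, φ (x - b / a * y) * S := by
            apply lintegral_mono_ae
            filter_upwards [hgle] with y hy
            exact mul_le_mul_right hy _
        _ = (∫⁻ y, φ (x - b / a * y)) * S := lintegral_mul_const' S _ hS
        _ = ENNReal.ofReal |b/a|⁻¹ * ENNReal.ofReal (t ^ (-(1/2)*1 : ℝ)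
              * Real.sqrt (π * (M * t) / 1)) * S := by
            rw [lint_affine hc x φ hφm, hA1]
        _ = ENNReal.ofReal (Real.sqrt (π * M) * |b / a|⁻¹ *
              t ^ (-(1 / 2 : ℝ) * ((⊤:ℝ≥0∞).toReal⁻¹ - (⊤:ℝ≥0∞).toReal⁻¹))) * S := by
            rw [← ENNReal.ofReal_mul hcpos.le]
            congr 1
            have h3 : Real.sqrt (π * (M * t) / 1) = Real.sqrt (π * M) * Real.sqrt t := by
              rw [(by ring : π * (M * t) / 1 = (π * M) * t), Real.sqrt_mul (by positivity)]
            rw [h3, Real.sqrt_eq_rpow t]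
            simp only [ENNReal.toReal_top, inv_zero, sub_zero, mul_zero, Real.rpow_zero]
            rw [mul_one, (by ring : |b/a|⁻¹ * (t ^ (-(1/2):ℝ) * (√(π*M) * t^((1:ℝ)/2)))
              = √(π*M) * |b/a|⁻¹ * (t ^ (-(1/2):ℝ) * t^((1:ℝ)/2))), ← Real.rpow_add ht]
            norm_num
    rw [eLpNorm_exponent_top]
    exact essSup_le_of_ae_le _ (Filter.Eventually.of_forall hx)
  · by_cases hptop : p = ⊤
    · -- p = ⊤, q < ⊤
      subst hptop
      have hq0 : q ≠ 0 := (zero_lt_one.trans_le hq).ne'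
      set Q := q.toReal with hQdef
      have hQpos : 0 < Q := ENNReal.toReal_pos hq0 hqtop
      have hQ1 : 1 ≤ Q := by
        have := ENNReal.toReal_mono hqtop hq
        simpa using this
      rcases eq_or_lt_of_le hQ1 with hQ1' | hQ1'
      · -- Q = 1
        refine ⟨1, one_pos, ?_⟩
        intro t ht f hf
        obtain ⟨G, hGm, hG⟩ := hf.1.enorm
        set g : ℝ → ℝ≥0∞ := (Set.Iic (0:ℝ)).indicator G with hgdef
        set φ : ℝ → ℝ≥0∞ :=
          fun z => ENNReal.ofReal (t ^ (-(1/2):ℝ) * Real.exp (-(z - b*t)^2/(M*t))) with hφdef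
        have hB1 : ∫⁻ z, g z = ∫⁻ y in Set.Iic (0:ℝ), (‖f y‖₊ : ℝ≥0∞) := by
          rw [hgdef, lintegral_indicator measurableSet_Iic]
          apply lintegral_congr_ae
          filter_upwards [hG] with y hy
          rw [← hy]
          rfl
        have hBnorm : eLpNorm f q (volume.restrict (Set.Iic (0:ℝ))) = ∫⁻ z, g z := by
          rw [eLpNorm_eq_lintegral_rpow_enorm_toReal hq0 hqtop, hB1, ← hQdef, ← hQ1']
          simp
          rfl
        have hx : ∀ x : ℝ, (‖∫ y in Set.Iic (0:ℝ),
            (if |y| ≤ a * t then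
              t ^ (-(1 / 2) : ℝ) * Real.exp (-(x - b * (t - |y| / a)) ^ 2 / (M * t))
                * Real.exp (-η * max x 0)
            else 0) * f y‖₊ : ℝ≥0∞)
            ≤ ENNReal.ofReal (1 * t ^ (-(1 / 2 : ℝ) * (q.toReal⁻¹ - (⊤:ℝ≥0∞).toReal⁻¹)))
              * eLpNorm f q (volume.restrict (Set.Iic (0:ℝ))) := by
          intro x
          calc (‖∫ y in Set.Iic (0:ℝ), _ * f y‖₊ : ℝ≥0∞)
              ≤ ∫⁻ y, φ (x - b / a * y) * g y := keybound ha hM hη ht f G hG x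
            _ ≤ ∫⁻ y, ENNReal.ofReal (t ^ (-(1/2):ℝ)) * g y := by
                apply lintegral_mono
                intro y
                apply mul_le_mul_left
                apply ENNReal.ofReal_le_ofReal
                have h0 : Real.exp (-(x - b / a * y - b*t)^2/(M*t)) ≤ 1 := by
                  rw [Real.exp_le_one_iff, neg_div]
                  have : (0:ℝ) ≤ (x - b / a * y - b*t)^2/(M*t) := by positivity
                  linarith
                calc t ^ (-(1/2):ℝ) * Real.exp (-(x - b / a * y - b*t)^2/(M*t))
                    ≤ t ^ (-(1/2):ℝ) * 1 := mul_le_mul_of_nonneg_left h0 (by positivity)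
                  _ = t ^ (-(1/2):ℝ) := mul_one _
            _ = ENNReal.ofReal (t ^ (-(1/2):ℝ)) * ∫⁻ z, g z :=
                lintegral_const_mul' _ _ ENNReal.ofReal_ne_top
            _ = ENNReal.ofReal (1 * t ^ (-(1 / 2 : ℝ) * (q.toReal⁻¹ - (⊤:ℝ≥0∞).toReal⁻¹)))
                * eLpNorm f q (volume.restrict (Set.Iic (0:ℝ))) := by
                rw [hBnorm]
                congr 2
                rw [one_mul, ← hQdef, ← hQ1']
                norm_num
        rw [eLpNorm_exponent_top]
        exact essSup_le_of_ae_le _ (Filter.Eventually.of_forall hx)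
      · -- 1 < Q
        have h1Q : (0:ℝ) < 1 - 1/Q := by
          have : 1/Q < 1 := by rw [div_lt_one hQpos]; exact hQ1'
          linarith
        set R := (1 - 1/Q)⁻¹ with hRdef
        have hRpos : 0 < R := by rw [hRdef]; positivity
        have hRinv : 1/R = 1 - 1/Q := by rw [one_div, hRdef, inv_inv]
        have hR1 : 1 < R := by
          rw [hRdef, one_lt_inv₀ h1Q]
          have : (0:ℝ) < 1/Q := by positivity
          linarith
        have hconj : R.HolderConjugate Q := by
          refine ⟨?_, hRpos, hQpos⟩
          rw [inv_one, ← one_div, hRinv, ← one_div]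
          ring
        refine ⟨(π * M / R) ^ (1/(2*R)) * |b / a|⁻¹ ^ (1/R), by positivity, ?_⟩
        intro t ht f hf
        obtain ⟨G, hGm, hG⟩ := hf.1.enorm
        set g : ℝ → ℝ≥0∞ := (Set.Iic (0:ℝ)).indicator G with hgdef
        have hgm : Measurable g := hGm.indicator measurableSet_Iic
        set φ : ℝ → ℝ≥0∞ :=
          fun z => ENNReal.ofReal (t ^ (-(1/2):ℝ) * Real.exp (-(z - b*t)^2/(M*t))) with hφdef
        have hφm : Measurable φ := by
          apply ENNReal.measurable_ofReal.comp
          exact (measurable_const.mul (Real.measurable_exp.comp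
            ((((measurable_id.sub measurable_const).pow_const 2).neg).div_const _)))
        have hAnorm : (∫⁻ z, φ z ^ R) ^ (1/R)
            = ENNReal.ofReal ((π * M / R) ^ ((1:ℝ)/(2*R)) * t ^ (-(1/2) * (1 - 1/R))) := by
          have htrans : ∫⁻ z, φ z ^ R
              = ∫⁻ z, (ENNReal.ofReal (t ^ (-(1/2):ℝ) * Real.exp (-z^2/(M*t)))) ^ R := by
            simp_rw [hφdef, sub_eq_add_neg]
            exact lintegral_add_right_eq_self
              (fun z => (ENNReal.ofReal (t ^ (-(1/2):ℝ) * Real.exp (-z^2/(M*t)))) ^ R) (-(b*t))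
          rw [htrans, gauss_norm M t R hM ht hRpos]
        have hBeq : ∫⁻ z, g z ^ Q = ∫⁻ y in Set.Iic (0:ℝ), (‖f y‖₊ : ℝ≥0∞) ^ Q := by
          have h1 : ∀ z, g z ^ Q = (Set.Iic (0:ℝ)).indicator (fun y => G y ^ Q) z := by
            intro z
            by_cases hz : z ∈ Set.Iic (0:ℝ)
            · rw [hgdef, Set.indicator_of_mem hz, Set.indicator_of_mem hz]
            · rw [hgdef, Set.indicator_of_notMem hz, Set.indicator_of_notMem hz,
                ENNReal.zero_rpow_of_pos hQpos]
          simp_rw [h1]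
          rw [lintegral_indicator measurableSet_Iic]
          apply lintegral_congr_ae
          filter_upwards [hG] with y hy
          rw [← hy]
          rfl
        have hBnorm : eLpNorm f q (volume.restrict (Set.Iic (0:ℝ)))
            = (∫⁻ z, g z ^ Q) ^ (1/Q) := by
          rw [eLpNorm_eq_lintegral_rpow_enorm_toReal hq0 hqtop, hBeq]
          rfl
        have hx : ∀ x : ℝ, (‖∫ y in Set.Iic (0:ℝ),
            (if |y| ≤ a * t then
              t ^ (-(1 / 2) : ℝ) * Real.exp (-(x - b * (t - |y| / a)) ^ 2 / (M * t))
                * Real.exp (-η * max x 0)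
            else 0) * f y‖₊ : ℝ≥0∞)
            ≤ ENNReal.ofReal ((π * M / R) ^ (1/(2*R)) * |b / a|⁻¹ ^ (1/R)
                * t ^ (-(1 / 2 : ℝ) * (q.toReal⁻¹ - (⊤:ℝ≥0∞).toReal⁻¹)))
              * eLpNorm f q (volume.restrict (Set.Iic (0:ℝ))) := by
          intro x
          have hm : Measurable fun y : ℝ => φ (x - b / a * y) :=
            hφm.comp (measurable_const.sub (measurable_id.const_mul _))
          calc (‖∫ y in Set.Iic (0:ℝ), _ * f y‖₊ : ℝ≥0∞)
              ≤ ∫⁻ y, φ (x - b / a * y) * g y := keybound ha hM hη ht f G hG x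
            _ ≤ (∫⁻ y, φ (x - b / a * y) ^ R) ^ (1/R) * (∫⁻ y, g y ^ Q) ^ (1/Q) :=
                ENNReal.lintegral_mul_le_Lp_mul_Lq volume hconj hm.aemeasurable hgm.aemeasurable
            _ = (ENNReal.ofReal |b/a|⁻¹ * ∫⁻ z, φ z ^ R) ^ (1/R) * (∫⁻ z, g z ^ Q) ^ (1/Q) := by
                rw [lint_affine hc x (fun z => φ z ^ R) (hφm.pow_const R)]
            _ = ENNReal.ofReal (|b/a|⁻¹ ^ (1/R)) * ((∫⁻ z, φ z ^ R) ^ (1/R))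
                * (∫⁻ z, g z ^ Q) ^ (1/Q) := by
                rw [ENNReal.mul_rpow_of_nonneg _ _ (by positivity : (0:ℝ) ≤ 1/R),
                  ENNReal.ofReal_rpow_of_nonneg hcpos.le (by positivity : (0:ℝ) ≤ 1/R)]
            _ = ENNReal.ofReal ((π * M / R) ^ (1/(2*R)) * |b / a|⁻¹ ^ (1/R)
                * t ^ (-(1 / 2 : ℝ) * (q.toReal⁻¹ - (⊤:ℝ≥0∞).toReal⁻¹)))
                * eLpNorm f q (volume.restrict (Set.Iic (0:ℝ))) := by
                rw [hAnorm, hBnorm, ← ENNReal.ofReal_mul (by positivity)]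
                congr 2
                have hexp : (-(1/2) * (1 - 1/R) : ℝ)
                    = -(1 / 2 : ℝ) * (q.toReal⁻¹ - (⊤:ℝ≥0∞).toReal⁻¹) := by
                  rw [hRinv, ← hQdef]
                  simp only [ENNReal.toReal_top, inv_zero]
                  ring
                rw [hexp]
                ring
        rw [eLpNorm_exponent_top]
        exact essSup_le_of_ae_le _ (Filter.Eventually.of_forall hx)
    · -- main finite case
      have hq0 : q ≠ 0 := (zero_lt_one.trans_le hq).ne'
      have hp0 : p ≠ 0 := (zero_lt_one.trans_le (hq.trans hqp)).ne'
      set P := p.toReal with hPdef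
      set Q := q.toReal with hQdef
      have hPpos : 0 < P := ENNReal.toReal_pos hp0 hptop
      have hQpos : 0 < Q := ENNReal.toReal_pos hq0 hqtop
      have hQ1 : 1 ≤ Q := by
        have := ENNReal.toReal_mono hqtop hq
        simpa using this
      have hQP : Q ≤ P := ENNReal.toReal_mono hptop hqp
      have hinvQ : 1/Q ≤ 1 := by rw [div_le_one hQpos]; exact hQ1
      have hRpos' : (0:ℝ) < 1 - 1/Q + 1/P := by
        have : (0:ℝ) < 1/P := by positivity
        linarith
      set R := (1 - 1/Q + 1/P)⁻¹ with hRdef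
      have hRpos : 0 < R := by rw [hRdef]; positivity
      have hRinv : 1/R = 1 - 1/Q + 1/P := by rw [one_div, hRdef, inv_inv]
      have hw1 : (0:ℝ) ≤ 1/R - 1/P := by rw [hRinv]; linarith
      have hw2 : (0:ℝ) ≤ 1/Q - 1/P := by
        have := one_div_le_one_div_of_le hQpos hQP
        linarith
      have hsum : 1/R + 1/Q - 1/P = 1 := by rw [hRinv]; ring
      refine ⟨(π * M / R) ^ (1/(2*R)) * |b / a|⁻¹ ^ (1/R - 1/P), by positivity, ?_⟩
      intro t ht f hf
      obtain ⟨G, hGm, hG⟩ := hf.1.enorm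
      set g : ℝ → ℝ≥0∞ := (Set.Iic (0:ℝ)).indicator G with hgdef
      have hgm : Measurable g := hGm.indicator measurableSet_Iic
      set φ : ℝ → ℝ≥0∞ :=
        fun z => ENNReal.ofReal (t ^ (-(1/2):ℝ) * Real.exp (-(z - b*t)^2/(M*t))) with hφdef
      have hφm : Measurable φ := by
        apply ENNReal.measurable_ofReal.comp
        exact (measurable_const.mul (Real.measurable_exp.comp
          ((((measurable_id.sub measurable_const).pow_const 2).neg).div_const _)))
      have hAnorm : (∫⁻ z, φ z ^ R) ^ (1/R)
          = ENNReal.ofReal ((π * M / R) ^ ((1:ℝ)/(2*R)) * t ^ (-(1/2) * (1 - 1/R))) := by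
        have htrans : ∫⁻ z, φ z ^ R
            = ∫⁻ z, (ENNReal.ofReal (t ^ (-(1/2):ℝ) * Real.exp (-z^2/(M*t)))) ^ R := by
          simp_rw [hφdef, sub_eq_add_neg]
          exact lintegral_add_right_eq_self
            (fun z => (ENNReal.ofReal (t ^ (-(1/2):ℝ) * Real.exp (-z^2/(M*t)))) ^ R) (-(b*t))
        rw [htrans, gauss_norm M t R hM ht hRpos]
      have hBeq : ∫⁻ z, g z ^ Q = ∫⁻ y in Set.Iic (0:ℝ), (‖f y‖₊ : ℝ≥0∞) ^ Q := by
        have h1 : ∀ z, g z ^ Q = (Set.Iic (0:ℝ)).indicator (fun y => G y ^ Q) z := by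
          intro z
          by_cases hz : z ∈ Set.Iic (0:ℝ)
          · rw [hgdef, Set.indicator_of_mem hz, Set.indicator_of_mem hz]
          · rw [hgdef, Set.indicator_of_notMem hz, Set.indicator_of_notMem hz,
              ENNReal.zero_rpow_of_pos hQpos]
        simp_rw [h1]
        rw [lintegral_indicator measurableSet_Iic]
        apply lintegral_congr_ae
        filter_upwards [hG] with y hy
        rw [← hy]
        rfl
      have hBnorm : eLpNorm f q (volume.restrict (Set.Iic (0:ℝ))) = (∫⁻ z, g z ^ Q) ^ (1/Q) := by
        rw [eLpNorm_eq_lintegral_rpow_enorm_toReal hq0 hqtop, hBeq]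
        rfl
      rw [eLpNorm_eq_lintegral_rpow_enorm_toReal hp0 hptop]
      calc (∫⁻ x, (‖∫ y in Set.Iic (0:ℝ),
            (if |y| ≤ a * t then
              t ^ (-(1 / 2) : ℝ) * Real.exp (-(x - b * (t - |y| / a)) ^ 2 / (M * t))
                * Real.exp (-η * max x 0)
            else 0) * f y‖₊ : ℝ≥0∞) ^ P) ^ (1/P)
          ≤ (∫⁻ x : ℝ, (∫⁻ y, φ (x - b / a * y) * g y) ^ P) ^ (1/P) := by
            apply ENNReal.rpow_le_rpow _ (by positivity)
            apply lintegral_mono fun x => ?_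
            exact ENNReal.rpow_le_rpow (keybound ha hM hη ht f G hG x) hPpos.le
        _ ≤ (((∫⁻ z, φ z ^ R) ^ (1/R) * (∫⁻ z, g z ^ Q) ^ (1/Q)
              * ENNReal.ofReal (|b/a|⁻¹ ^ (1/R - 1/P))) ^ P) ^ (1/P) :=
            ENNReal.rpow_le_rpow
              (young_core hc φ g hφm hgm hPpos hQpos hRpos hw1 hw2 hsum) (by positivity)
        _ = (∫⁻ z, φ z ^ R) ^ (1/R) * (∫⁻ z, g z ^ Q) ^ (1/Q)
              * ENNReal.ofReal (|b/a|⁻¹ ^ (1/R - 1/P)) := by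
            rw [← ENNReal.rpow_mul, mul_one_div_cancel hPpos.ne', ENNReal.rpow_one]
        _ = ENNReal.ofReal ((π * M / R) ^ (1/(2*R)) * |b / a|⁻¹ ^ (1/R - 1/P)
              * t ^ (-(1 / 2 : ℝ) * (q.toReal⁻¹ - p.toReal⁻¹)))
              * eLpNorm f q (volume.restrict (Set.Iic (0:ℝ))) := by
            rw [hAnorm, hBnorm, mul_right_comm, ← ENNReal.ofReal_mul (by positivity)]
            congr 2
            have hexp : (-(1/2) * (1 - 1/R) : ℝ) = -(1 / 2 : ℝ) * (q.toReal⁻¹ - p.toReal⁻¹) := by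
              rw [hRinv, ← hQdef, ← hPdef]
              ring
            rw [hexp]
            ring
end

section
/- Let φ : ℝ → ℝ^n be continuously differentiable with φ ∈ L²(ℝ,ℝ^n), φ′ ∈ L²(ℝ,ℝ^n), and ‖φ‖_{L²} > 0, and let Ū : ℝ → ℝ^n be continuously differentiable with Ū′ = φ. Then there exist δ > 0 and C > 0 such that for every W ∈ L²(ℝ,ℝ^n) with ‖W‖_{L²} < δ there exists a unique α ∈ ℝ with |α| ≤ C ‖W‖_{L²} satisfying ∫_ℝ ⟨φ(x), Ū(x+α) − Ū(x) + W(x+α)⟩ dx = 0. -/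
open MeasureTheory Set Filter
open scoped ENNReal

set_option linter.unusedSectionVars false
set_option linter.unusedVariables false
set_option maxHeartbeats 1600000

namespace Stmt17Aux

noncomputable section

variable {E : Type*} [NormedAddCommGroup E] [InnerProductSpace ℝ E] [CompleteSpace E]

local notation "⟪" x ", " y "⟫" => (inner ℝ x y : ℝ)

noncomputable def tR (f : ℝ → E) : ℝ := (eLpNorm f 2 (volume : Measure ℝ)).toReal

lemma tR_nonneg (f : ℝ → E) : 0 ≤ tR f := ENNReal.toReal_nonneg

lemma shift_memL2 {f : ℝ → E} (hf : MemLp f 2 (volume : Measure ℝ)) (c : ℝ) :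
    MemLp (fun x => f (x + c)) 2 (volume : Measure ℝ) :=
  hf.comp_measurePreserving (measurePreserving_add_right volume c)

lemma shift_tR {f : ℝ → E} (hf : MemLp f 2 (volume : Measure ℝ)) (c : ℝ) :
    tR (fun x => f (x + c)) = tR f := by
  unfold tR
  rw [show (fun x => f (x + c)) = f ∘ (· + c) from rfl,
    eLpNorm_comp_measurePreserving hf.1 (measurePreserving_add_right volume c)]

lemma integrable_inner_of_L2 {f g : ℝ → E} (hf : MemLp f 2 (volume : Measure ℝ))
    (hg : MemLp g 2 (volume : Measure ℝ)) :
    Integrable (fun x => ⟪f x, g x⟫) volume := by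
  have h := L2.integrable_inner (𝕜 := ℝ) (hf.toLp f) (hg.toLp g)
  refine h.congr ?_
  filter_upwards [hf.coeFn_toLp, hg.coeFn_toLp] with x h1 h2
  rw [h1, h2]

lemma integrable_norm_mul {f g : ℝ → E} (hf : MemLp f 2 (volume : Measure ℝ))
    (hg : MemLp g 2 (volume : Measure ℝ)) :
    Integrable (fun x => ‖f x‖ * ‖g x‖) volume := by
  refine (integrable_inner_of_L2 hf.norm hg.norm).congr ?_
  filter_upwards with x
  simp [RCLike.inner_apply, mul_comm]

lemma integral_norm_mul_le {f g : ℝ → E} (hf : MemLp f 2 (volume : Measure ℝ))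
    (hg : MemLp g 2 (volume : Measure ℝ)) :
    ∫ x, ‖f x‖ * ‖g x‖ ≤ tR f * tR g := by
  have hf' : MemLp (fun x => ‖f x‖) 2 (volume : Measure ℝ) := hf.norm
  have hg' : MemLp (fun x => ‖g x‖) 2 (volume : Measure ℝ) := hg.norm
  calc ∫ x, ‖f x‖ * ‖g x‖ = ∫ x, ⟪(hf'.toLp _) x, (hg'.toLp _) x⟫ := by
        refine integral_congr_ae ?_
        filter_upwards [hf'.coeFn_toLp, hg'.coeFn_toLp] with x h1 h2
        rw [h1, h2]; simp [RCLike.inner_apply, mul_comm]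
    _ = ⟪hf'.toLp _, hg'.toLp _⟫ := (L2.inner_def (𝕜 := ℝ) _ _).symm
    _ ≤ ‖hf'.toLp _‖ * ‖hg'.toLp _‖ := real_inner_le_norm _ _
    _ = tR f * tR g := by
        rw [Lp.norm_toLp _ hf', Lp.norm_toLp _ hg']
        unfold tR
        rw [eLpNorm_norm, eLpNorm_norm]

lemma abs_integral_inner_le {f g : ℝ → E} (hf : MemLp f 2 (volume : Measure ℝ))
    (hg : MemLp g 2 (volume : Measure ℝ)) :
    |∫ x, ⟪f x, g x⟫| ≤ tR f * tR g := by
  have h1 : |∫ x, ⟪f x, g x⟫| ≤ ∫ x, ‖⟪f x, g x⟫‖ := by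
    rw [← Real.norm_eq_abs]; exact norm_integral_le_integral_norm _
  refine h1.trans (le_trans (integral_mono (integrable_inner_of_L2 hf hg).norm
    (integrable_norm_mul hf hg) fun x => norm_inner_le_norm _ _) (integral_norm_mul_le hf hg))

lemma integral_norm_inner_le {f g : ℝ → E} (hf : MemLp f 2 (volume : Measure ℝ))
    (hg : MemLp g 2 (volume : Measure ℝ)) :
    ∫ x, ‖⟪f x, g x⟫‖ ≤ tR f * tR g :=
  le_trans (integral_mono (integrable_inner_of_L2 hf hg).norm
    (integrable_norm_mul hf hg) fun x => norm_inner_le_norm _ _) (integral_norm_mul_le hf hg)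

lemma self_inner_eq {f : ℝ → E} (hf : MemLp f 2 (volume : Measure ℝ)) :
    ∫ x, ⟪f x, f x⟫ = tR f ^ 2 := by
  calc ∫ x, ⟪f x, f x⟫ = ∫ x, ⟪(hf.toLp f) x, (hf.toLp f) x⟫ := by
        refine integral_congr_ae ?_
        filter_upwards [hf.coeFn_toLp] with x h1
        rw [h1]
    _ = ⟪hf.toLp f, hf.toLp f⟫ := (L2.inner_def (𝕜 := ℝ) _ _).symm
    _ = ‖hf.toLp f‖ ^ 2 := real_inner_self_eq_norm_sq _
    _ = tR f ^ 2 := by rw [Lp.norm_toLp _ hf]; rfl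

lemma abs_integral_inner_shift_le {g ψ : ℝ → E} (hg : MemLp g 2 (volume : Measure ℝ))
    (hψ : MemLp ψ 2 (volume : Measure ℝ)) (c : ℝ) :
    |∫ x, ⟪g (x + c), ψ x⟫| ≤ tR g * tR ψ := by
  have h := abs_integral_inner_le (shift_memL2 hg c) hψ
  rwa [shift_tR hg c] at h

lemma key_swap (g ψ : ℝ → E) (hgc : Continuous g) (hg : MemLp g 2 (volume : Measure ℝ))
    (hψ : MemLp ψ 2 (volume : Measure ℝ)) (e a b : ℝ) :
    Integrable (Function.uncurry fun t x => ⟪g (x + e * t), ψ x⟫)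
      (((volume : Measure ℝ).restrict (Ioc a b)).prod (volume : Measure ℝ)) := by
  have hmeas : AEStronglyMeasurable (Function.uncurry fun t x => ⟪g (x + e * t), ψ x⟫)
      (((volume : Measure ℝ).restrict (Ioc a b)).prod (volume : Measure ℝ)) := by
    apply AEStronglyMeasurable.inner
    · exact (hgc.comp (continuous_snd.add (continuous_const.mul continuous_fst))).aestronglyMeasurable
    · exact hψ.1.comp_snd
  rw [integrable_prod_iff hmeas]
  constructor
  · exact Filter.Eventually.of_forall fun t => integrable_inner_of_L2 (shift_memL2 hg (e * t)) hψ
  · have hbound : ∀ t : ℝ, ∫ x, ‖(⟪g (x + e * t), ψ x⟫ : ℝ)‖ ≤ tR g * tR ψ := by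
      intro t
      have h1 := integral_norm_inner_le (shift_memL2 hg (e * t)) hψ
      rwa [shift_tR hg (e * t)] at h1
    have hconst : Integrable (fun _ : ℝ => tR g * tR ψ) ((volume : Measure ℝ).restrict (Ioc a b)) :=
      integrableOn_const measure_Ioc_lt_top.ne
    refine hconst.mono' hmeas.norm.integral_prod_right' ?_
    refine Filter.Eventually.of_forall fun t => ?_
    rw [Real.norm_eq_abs, abs_of_nonneg (integral_nonneg fun x => norm_nonneg _)]
    exact hbound t

lemma master (u u' ψ : ℝ → E) (hu : ∀ x, HasDerivAt u (u' x) x)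
    (hu'c : Continuous u') (hu'2 : MemLp u' 2 (volume : Measure ℝ))
    (hψ : MemLp ψ 2 (volume : Measure ℝ)) (e a b : ℝ) (hab : a ≤ b) :
    Integrable (fun x => ⟪u (x + e * b) - u (x + e * a), ψ x⟫) volume ∧
    IntegrableOn (fun t => ∫ x, ⟪u' (x + e * t), ψ x⟫) (Ioc a b) volume ∧
    ∫ x, ⟪u (x + e * b) - u (x + e * a), ψ x⟫ =
      e * ∫ t in Ioc a b, (∫ x, ⟪u' (x + e * t), ψ x⟫) := by
  have hswap := key_swap u' ψ hu'c hu'2 hψ e a b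
  -- pointwise FTC
  have hptw : ∀ x : ℝ, u (x + e * b) - u (x + e * a) = ∫ t in Ioc a b, e • u' (x + e * t) := by
    intro x
    have hderiv : ∀ t ∈ uIcc a b, HasDerivAt (fun s => u (x + e * s)) (e • u' (x + e * t)) t := by
      intro t _
      have h1 : HasDerivAt (fun s : ℝ => x + e * s) e t := by
        simpa using ((hasDerivAt_id t).const_mul e).const_add x
      exact (hu (x + e * t)).scomp t h1
    have hint : IntervalIntegrable (fun t => e • u' (x + e * t)) volume a b :=
      (((hu'c.comp (continuous_const.add
        (continuous_const.mul continuous_id))).const_smul e)).intervalIntegrable a b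
    have h2 := intervalIntegral.integral_eq_sub_of_hasDerivAt hderiv hint
    rw [intervalIntegral.integral_of_le hab] at h2
    rw [h2]
  -- pointwise inner
  have hinner : ∀ x : ℝ, ⟪u (x + e * b) - u (x + e * a), ψ x⟫
      = e * ∫ t in Ioc a b, ⟪u' (x + e * t), ψ x⟫ := by
    intro x
    have hintt : Integrable (fun t => u' (x + e * t)) ((volume : Measure ℝ).restrict (Ioc a b)) := by
      apply Continuous.integrableOn_Ioc
      exact hu'c.comp (continuous_const.add (continuous_const.mul continuous_id))
    rw [hptw x, real_inner_comm]
    rw [show (∫ t in Ioc a b, e • u' (x + e * t)) = e • ∫ t in Ioc a b, u' (x + e * t) from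
      integral_smul e _]
    rw [inner_smul_right]
    rw [← integral_inner hintt (ψ x)]
    congr 1
    exact integral_congr_ae (ae_of_all _ fun t => real_inner_comm _ _)
  have hintx : Integrable
      (fun x => ∫ t in Ioc a b, ⟪u' (x + e * t), ψ x⟫) volume := hswap.integral_prod_right
  refine ⟨?_, hswap.integral_prod_left, ?_⟩
  · exact (hintx.const_mul e).congr (ae_of_all _ fun x => (hinner x).symm)
  · calc ∫ x, ⟪u (x + e * b) - u (x + e * a), ψ x⟫
        = ∫ x, e * ∫ t in Ioc a b, ⟪u' (x + e * t), ψ x⟫ :=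
          integral_congr_ae (ae_of_all _ hinner)
      _ = e * ∫ x, ∫ t in Ioc a b, ⟪u' (x + e * t), ψ x⟫ := integral_const_mul e _
      _ = e * ∫ t in Ioc a b, ∫ x, ⟪u' (x + e * t), ψ x⟫ := by
          rw [← integral_integral_swap hswap]

end

end Stmt17Aux

open Stmt17Aux

theorem stmt17 {n : ℕ} (φ Ubar : ℝ → EuclideanSpace ℝ (Fin n))
    (hφC1 : ContDiff ℝ 1 φ)
    (hφL2 : MemLp φ 2 volume) (hφ'L2 : MemLp (deriv φ) 2 volume)
    (hφpos : 0 < eLpNorm φ 2 volume)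
    (hUbar : ∀ x : ℝ, HasDerivAt Ubar (φ x) x) :
    ∃ δ : ℝ, 0 < δ ∧ ∃ C : ℝ, 0 < C ∧
      ∀ W : ℝ → EuclideanSpace ℝ (Fin n), MemLp W 2 volume →
        eLpNorm W 2 volume < ENNReal.ofReal δ →
        ∃! α : ℝ, |α| ≤ C * (eLpNorm W 2 volume).toReal ∧
          ∫ x, (inner ℝ (φ x) (Ubar (x + α) - Ubar x + W (x + α)) : ℝ) = 0 := by
  classical
  have hφcont : Continuous φ := hφC1.continuous
  have hφ'cont : Continuous (deriv φ) := hφC1.continuous_deriv le_rfl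
  have hφderiv : ∀ x, HasDerivAt φ (deriv φ x) x := fun x =>
    (hφC1.differentiable one_ne_zero x).hasDerivAt
  set A : ℝ := tR φ with hAdef
  have hA0 : 0 < A := ENNReal.toReal_pos hφpos.ne' hφL2.2.ne
  set B' : ℝ := tR (deriv φ) with hB'def
  have hB'0 : 0 ≤ B' := tR_nonneg _
  set B : ℝ := B' + 1 with hBdef
  have hB0 : 0 < B := by positivity
  set ρ : ℝ := A / (4 * B) with hρdef
  have hρ0 : 0 < ρ := by positivity
  set δ : ℝ := A ^ 2 / (8 * B) with hδdef
  have hδ0 : 0 < δ := by positivity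
  set m : ℝ := A ^ 2 / 2 with hmdef
  have hm0 : 0 < m := by positivity
  refine ⟨δ, hδ0, 2 / A, by positivity, ?_⟩
  intro W hW hWlt
  set w : ℝ := (eLpNorm W 2 volume).toReal with hwdef
  have hwtR : tR W = w := rfl
  have hw0 : 0 ≤ w := ENNReal.toReal_nonneg
  have hwlt : w < δ := by
    have h1 : (eLpNorm W 2 volume).toReal < (ENNReal.ofReal δ).toReal :=
      ENNReal.toReal_strict_mono ENNReal.ofReal_ne_top hWlt
    rwa [ENNReal.toReal_ofReal hδ0.le] at h1
  -- master applications
  have hmU := fun (a b : ℝ) (hab : a ≤ b) =>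
    master Ubar φ φ hUbar hφcont hφL2 hφL2 1 a b hab
  have hmP := fun (a b : ℝ) (hab : a ≤ b) =>
    master φ (deriv φ) φ hφderiv hφ'cont hφ'L2 hφL2 1 a b hab
  have hmW := fun (a b : ℝ) (hab : a ≤ b) =>
    master φ (deriv φ) W hφderiv hφ'cont hφ'L2 hW (-1) a b hab
  set G : ℝ → ℝ := fun α => ∫ x, (inner ℝ (φ x) (Ubar (x + α) - Ubar x + W (x + α)) : ℝ)
    with hGdef
  set Pf : ℝ → ℝ := fun t => ∫ x, (inner ℝ (φ (x + t)) (φ x) : ℝ) with hPfdef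
  set qW : ℝ → ℝ := fun t => ∫ x, (inner ℝ (deriv φ (x + (-1) * t)) (W x) : ℝ) with hqWdef
  -- integrability of pieces
  have intU : ∀ α : ℝ, Integrable
      (fun x => (inner ℝ (Ubar (x + α) - Ubar x) (φ x) : ℝ)) volume := by
    intro α
    rcases le_total 0 α with h | h
    · have h1 := (hmU 0 α h).1
      simpa using h1
    · have h1 := (hmU α 0 h).1.neg
      refine h1.congr (ae_of_all _ fun x => ?_)
      simp [inner_sub_left]
  have intW : ∀ α : ℝ, Integrable (fun x => (inner ℝ (φ x) (W (x + α)) : ℝ)) volume :=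
    fun α => integrable_inner_of_L2 hφL2 (shift_memL2 hW α)
  have hGsplit : ∀ α : ℝ, G α =
      (∫ x, (inner ℝ (Ubar (x + α) - Ubar x) (φ x) : ℝ)) +
        ∫ x, (inner ℝ (φ x) (W (x + α)) : ℝ) := by
    intro α
    have h1 : G α = ∫ x, ((inner ℝ (Ubar (x + α) - Ubar x) (φ x) : ℝ) +
        (inner ℝ (φ x) (W (x + α)) : ℝ)) := by
      refine integral_congr_ae (ae_of_all _ fun x => ?_)
      show (inner ℝ (φ x) (Ubar (x + α) - Ubar x + W (x + α)) : ℝ) = _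
      rw [inner_add_right, real_inner_comm (Ubar (x + α) - Ubar x) (φ x)]
    rw [h1, integral_add (intU α) (intW α)]
  -- change of variables for the W part
  have hchW : ∀ c : ℝ, (∫ x, (inner ℝ (φ x) (W (x + c)) : ℝ)) =
      ∫ x, (inner ℝ (φ (x + (-1) * c)) (W x) : ℝ) := by
    intro c
    have h1 := integral_add_right_eq_self
      (μ := (volume : Measure ℝ)) (fun x => (inner ℝ (φ (x + (-1) * c)) (W x) : ℝ)) c
    rw [← h1]
    refine integral_congr_ae (ae_of_all _ fun x => ?_)
    beta_reduce
    rw [show x + c + (-1) * c = x by ring]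
  -- difference formulas
  have hdiffU : ∀ a b : ℝ, a ≤ b →
      (∫ x, (inner ℝ (Ubar (x + b) - Ubar x) (φ x) : ℝ)) -
        (∫ x, (inner ℝ (Ubar (x + a) - Ubar x) (φ x) : ℝ)) = ∫ t in Ioc a b, Pf t := by
    intro a b hab
    have h1 : (∫ x, (inner ℝ (Ubar (x + b) - Ubar x) (φ x) : ℝ)) -
        (∫ x, (inner ℝ (Ubar (x + a) - Ubar x) (φ x) : ℝ)) =
        ∫ x, (inner ℝ (Ubar (x + 1 * b) - Ubar (x + 1 * a)) (φ x) : ℝ) := by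
      rw [← integral_sub (intU b) (intU a)]
      refine integral_congr_ae (ae_of_all _ fun x => ?_)
      simp [inner_sub_left]
    rw [h1, (hmU a b hab).2.2, one_mul]
    refine setIntegral_congr_ae measurableSet_Ioc (ae_of_all _ fun t ht => ?_)
    simp [hPfdef]
  have hdiffW : ∀ a b : ℝ, a ≤ b →
      (∫ x, (inner ℝ (φ x) (W (x + b)) : ℝ)) - (∫ x, (inner ℝ (φ x) (W (x + a)) : ℝ)) =
        (-1) * ∫ t in Ioc a b, qW t := by
    intro a b hab
    rw [hchW a, hchW b]
    have h1 : (∫ x, (inner ℝ (φ (x + (-1) * b)) (W x) : ℝ)) -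
        (∫ x, (inner ℝ (φ (x + (-1) * a)) (W x) : ℝ)) =
        ∫ x, (inner ℝ (φ (x + (-1) * b) - φ (x + (-1) * a)) (W x) : ℝ) := by
      rw [← integral_sub (integrable_inner_of_L2 (shift_memL2 hφL2 _) hW)
        (integrable_inner_of_L2 (shift_memL2 hφL2 _) hW)]
      refine integral_congr_ae (ae_of_all _ fun x => ?_)
      simp [inner_sub_left]
    rw [h1, (hmW a b hab).2.2]
  -- bounds on Pf
  have hPf0 : Pf 0 = A ^ 2 := by
    have h1 : Pf 0 = ∫ x, (inner ℝ (φ x) (φ x) : ℝ) := by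
      refine integral_congr_ae (ae_of_all _ fun x => ?_)
      simp [hPfdef]
    rw [h1, self_inner_eq hφL2]
  have hqPbound : ∀ s : ℝ, |∫ x, (inner ℝ (deriv φ (x + 1 * s)) (φ x) : ℝ)| ≤ B' * A :=
    fun s => abs_integral_inner_shift_le hφ'L2 hφL2 (1 * s)
  have hPfdiff : ∀ t : ℝ, |Pf t - Pf 0| ≤ |t| * (B' * A) := by
    intro t
    rcases le_total 0 t with h | h
    · have h2 : Pf t - Pf 0 =
          ∫ x, (inner ℝ (φ (x + 1 * t) - φ (x + 1 * 0)) (φ x) : ℝ) := by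
        rw [← integral_sub (integrable_inner_of_L2 (shift_memL2 hφL2 t) hφL2)
          (integrable_inner_of_L2 (shift_memL2 hφL2 0) hφL2)]
        refine integral_congr_ae (ae_of_all _ fun x => ?_)
        simp [inner_sub_left, hPfdef]
      rw [h2, (hmP 0 t h).2.2, one_mul]
      have h3 := norm_setIntegral_le_of_norm_le_const (μ := (volume : Measure ℝ))
        (s := Ioc 0 t) (f := fun s => ∫ x, (inner ℝ (deriv φ (x + 1 * s)) (φ x) : ℝ))
        measure_Ioc_lt_top
        (fun s _ => by rw [Real.norm_eq_abs]; exact hqPbound s)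
      rw [Real.norm_eq_abs, measureReal_def, Real.volume_Ioc, ENNReal.toReal_ofReal (by linarith)] at h3
      calc |∫ s in Ioc 0 t, ∫ x, (inner ℝ (deriv φ (x + 1 * s)) (φ x) : ℝ)|
          ≤ B' * A * (t - 0) := h3
        _ = |t| * (B' * A) := by rw [abs_of_nonneg h]; ring
    · have h2 : Pf t - Pf 0 =
          -∫ x, (inner ℝ (φ (x + 1 * 0) - φ (x + 1 * t)) (φ x) : ℝ) := by
        rw [← integral_neg, ← integral_sub (integrable_inner_of_L2 (shift_memL2 hφL2 t) hφL2)
          (integrable_inner_of_L2 (shift_memL2 hφL2 0) hφL2)]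
        refine integral_congr_ae (ae_of_all _ fun x => ?_)
        simp [inner_sub_left, hPfdef]
      rw [h2, (hmP t 0 h).2.2, one_mul, abs_neg]
      have h3 := norm_setIntegral_le_of_norm_le_const (μ := (volume : Measure ℝ))
        (s := Ioc t 0) (f := fun s => ∫ x, (inner ℝ (deriv φ (x + 1 * s)) (φ x) : ℝ))
        measure_Ioc_lt_top
        (fun s _ => by rw [Real.norm_eq_abs]; exact hqPbound s)
      rw [Real.norm_eq_abs, measureReal_def, Real.volume_Ioc, ENNReal.toReal_ofReal (by linarith)] at h3
      calc |∫ s in Ioc t 0, ∫ x, (inner ℝ (deriv φ (x + 1 * s)) (φ x) : ℝ)|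
          ≤ B' * A * (0 - t) := h3
        _ = |t| * (B' * A) := by rw [abs_of_nonpos h]; ring
  have hPlow : ∀ t : ℝ, |t| ≤ ρ → 3 / 4 * A ^ 2 ≤ Pf t := by
    intro t ht
    have h1 := hPfdiff t
    have h2 : |t| * (B' * A) ≤ ρ * (B * A) := by
      have hba : B' * A ≤ B * A := by nlinarith
      nlinarith [abs_nonneg t, ht, hba, mul_nonneg hB'0 hA0.le]
    have h3 : ρ * (B * A) = A ^ 2 / 4 := by
      rw [hρdef]; field_simp
    have h4 := abs_le.1 h1
    nlinarith [hPf0, h2, h3, h4.1, h4.2]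
  have hPhigh : ∀ t : ℝ, |Pf t| ≤ A ^ 2 := by
    intro t
    have h1 := abs_integral_inner_shift_le hφL2 hφL2 t
    calc |Pf t| ≤ A * A := h1
      _ = A ^ 2 := by ring
  have hqWbound : ∀ t : ℝ, |qW t| ≤ B' * w := by
    intro t
    have h1 := abs_integral_inner_shift_le hφ'L2 hW ((-1) * t)
    rw [hwtR] at h1
    exact h1
  have hBw : B * w < A ^ 2 / 8 := by
    have h1 : B * w < B * δ := by
      rcases eq_or_lt_of_le hw0 with h | h
      · rw [← h]; simpa using mul_pos hB0 hδ0
      · exact (mul_lt_mul_iff_right₀ hB0).2 hwlt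
    have h2 : B * δ = A ^ 2 / 8 := by rw [hδdef]; field_simp
    exact lt_of_lt_of_le h1 h2.le
  -- key two-sided slope bound
  have hKey : ∀ a b : ℝ, a ∈ Icc (-ρ) ρ → b ∈ Icc (-ρ) ρ → a ≤ b →
      m * (b - a) ≤ G b - G a ∧ G b - G a ≤ 2 * A ^ 2 * (b - a) := by
    intro a b ha hb hab
    have hGdiff : G b - G a = (∫ t in Ioc a b, Pf t) + (-1) * ∫ t in Ioc a b, qW t := by
      rw [hGsplit a, hGsplit b, ← hdiffU a b hab, ← hdiffW a b hab]
      ring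
    have hPint : IntegrableOn Pf (Ioc a b) volume := by
      have h1 := (hmU a b hab).2.1
      refine h1.congr ?_
      refine ae_of_all _ fun t => ?_
      simp [hPfdef]
    have hvol : ((volume : Measure ℝ) (Ioc a b)).toReal = b - a := by
      rw [Real.volume_Ioc, ENNReal.toReal_ofReal (by linarith)]
    have habs : ∀ t ∈ Ioc a b, |t| ≤ ρ := by
      intro t ht
      rw [abs_le]
      exact ⟨by linarith [ha.1, ht.1], by linarith [hb.2, ht.2]⟩
    have hlowP : 3 / 4 * A ^ 2 * (b - a) ≤ ∫ t in Ioc a b, Pf t := by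
      have h1 := setIntegral_ge_of_const_le (μ := (volume : Measure ℝ))
        (c := 3 / 4 * A ^ 2) measurableSet_Ioc measure_Ioc_lt_top.ne
        (fun t ht => hPlow t (habs t ht)) hPint
      rw [measureReal_def, hvol, smul_eq_mul] at h1; linarith
    have hhighP : |∫ t in Ioc a b, Pf t| ≤ A ^ 2 * (b - a) := by
      have h1 := norm_setIntegral_le_of_norm_le_const (μ := (volume : Measure ℝ))
        (s := Ioc a b) (f := Pf) measure_Ioc_lt_top
        (fun t _ => by rw [Real.norm_eq_abs]; exact hPhigh t)
      rwa [Real.norm_eq_abs, measureReal_def, hvol] at h1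
    have hq : |∫ t in Ioc a b, qW t| ≤ B * w * (b - a) := by
      have h1 := norm_setIntegral_le_of_norm_le_const (μ := (volume : Measure ℝ))
        (s := Ioc a b) (f := qW) measure_Ioc_lt_top
        (fun t _ => by
          rw [Real.norm_eq_abs]
          calc |qW t| ≤ B' * w := hqWbound t
            _ ≤ B * w := by nlinarith)
      rwa [Real.norm_eq_abs, measureReal_def, hvol] at h1
    have hq1 := abs_le.1 hq
    have hP1 := abs_le.1 hhighP
    have hprod := mul_le_mul_of_nonneg_right hBw.le (sub_nonneg.2 hab)
    have hA2 : 0 ≤ A ^ 2 * (b - a) := mul_nonneg (by positivity) (sub_nonneg.2 hab)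
    constructor
    · rw [hGdiff, hmdef]
      nlinarith [hlowP, hq1.1, hq1.2, hprod, hA2]
    · rw [hGdiff]
      nlinarith [hP1.1, hP1.2, hq1.1, hq1.2, hprod, hA2]
  -- value at 0
  have hG0 : |G 0| ≤ A * w := by
    have h1 : G 0 = ∫ x, (inner ℝ (φ x) (W x) : ℝ) := by
      refine integral_congr_ae (ae_of_all _ fun x => ?_)
      simp
    rw [h1]
    have := abs_integral_inner_le hφL2 hW
    rwa [hwtR] at this
  have hAw : A * w < m * ρ := by
    have h1 : A * w < A * δ := by
      rcases eq_or_lt_of_le hw0 with h | h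
      · rw [← h]; simpa using mul_pos hA0 hδ0
      · exact (mul_lt_mul_iff_right₀ hA0).2 hwlt
    have h2 : A * δ = m * ρ := by
      rw [hδdef, hmdef, hρdef]; field_simp; ring
    linarith
  have hmem0 : (0 : ℝ) ∈ Icc (-ρ) ρ := ⟨by linarith, by linarith⟩
  have hmemρ : ρ ∈ Icc (-ρ) ρ := ⟨by linarith, le_rfl⟩
  have hmemnρ : -ρ ∈ Icc (-ρ) ρ := ⟨le_rfl, by linarith⟩
  have hG0' := abs_le.1 hG0
  have hGneg : G (-ρ) < 0 := by
    have h1 := (hKey (-ρ) 0 hmemnρ hmem0 (by linarith)).1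
    have h2 : m * ρ ≤ G 0 - G (-ρ) := by
      calc m * ρ = m * (0 - -ρ) := by ring
        _ ≤ G 0 - G (-ρ) := h1
    linarith
  have hGpos : 0 < G ρ := by
    have h1 := (hKey 0 ρ hmem0 hmemρ hρ0.le).1
    have h2 : m * ρ ≤ G ρ - G 0 := by
      calc m * ρ = m * (ρ - 0) := by ring
        _ ≤ G ρ - G 0 := h1
    linarith
  -- continuity
  have hlip : LipschitzOnWith (Real.toNNReal (2 * A ^ 2)) G (Icc (-ρ) ρ) := by
    refine LipschitzOnWith.of_dist_le_mul fun x hx y hy => ?_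
    rw [Real.dist_eq, Real.dist_eq, Real.coe_toNNReal _ (by positivity)]
    rcases le_total x y with h | h
    · have hk := hKey x y hx hy h
      rw [abs_of_nonpos (by linarith [hk.1, mul_nonneg hm0.le (sub_nonneg.2 h)]),
        abs_of_nonpos (by linarith)]
      nlinarith [hk.2]
    · have hk := hKey y x hy hx h
      rw [abs_of_nonneg (by linarith [hk.1, mul_nonneg hm0.le (sub_nonneg.2 h)]),
        abs_of_nonneg (by linarith)]
      nlinarith [hk.2]
  have hcont : ContinuousOn G (Icc (-ρ) ρ) := hlip.continuousOn
  -- IVT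
  obtain ⟨α₀, hα₀mem, hGα₀⟩ : ∃ α ∈ Icc (-ρ) ρ, G α = 0 := by
    have h := intermediate_value_Icc (by linarith : -ρ ≤ ρ) hcont
    have h0 : (0 : ℝ) ∈ Icc (G (-ρ)) (G ρ) := ⟨hGneg.le, hGpos.le⟩
    obtain ⟨α, hm1, hv⟩ := h h0
    exact ⟨α, hm1, hv⟩
  -- bound on α₀
  have hα₀bound : |α₀| ≤ 2 / A * w := by
    have hstep : m * |α₀| ≤ A * w := by
      rcases le_total 0 α₀ with h | h
      · have h1 := (hKey 0 α₀ hmem0 hα₀mem h).1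
        rw [hGα₀] at h1
        rw [abs_of_nonneg h]
        nlinarith [hG0'.1]
      · have h1 := (hKey α₀ 0 hα₀mem hmem0 h).1
        rw [hGα₀] at h1
        rw [abs_of_nonpos h]
        nlinarith [hG0'.2]
    rw [hmdef] at hstep
    rw [div_mul_eq_mul_div, le_div_iff₀ hA0]
    nlinarith [abs_nonneg α₀]
  -- uniqueness helper
  have huniq : ∀ β : ℝ, β ∈ Icc (-ρ) ρ → G β = 0 → β = α₀ := by
    intro β hβmem hβ0
    rcases lt_trichotomy β α₀ with h | h | h
    · exfalso
      have h1 := (hKey β α₀ hβmem hα₀mem h.le).1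
      rw [hGα₀, hβ0] at h1
      nlinarith
    · exact h
    · exfalso
      have h1 := (hKey α₀ β hα₀mem hβmem h.le).1
      rw [hGα₀, hβ0] at h1
      nlinarith
  have hCw_lt_ρ : 2 / A * w < ρ := by
    have h1 : 2 / A * w < 2 / A * δ := by
      rcases eq_or_lt_of_le hw0 with h | h
      · rw [← h]; simp; positivity
      · exact (mul_lt_mul_iff_right₀ (by positivity)).2 hwlt
    have h2 : 2 / A * δ = ρ := by
      rw [hδdef, hρdef]; field_simp; ring
    linarith
  refine ⟨α₀, ⟨hα₀bound, hGα₀⟩, ?_⟩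
  intro β hβ
  have hβmem : β ∈ Icc (-ρ) ρ := by
    have h1 : |β| < ρ := lt_of_le_of_lt hβ.1 hCw_lt_ρ
    have h2 := abs_le.1 h1.le
    exact ⟨h2.1, h2.2⟩
  exact huniq β hβmem hβ.2
end
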